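/- arXiv:2603.01531 — 9 statements merged into one kernel-verified Lean document; each statement's English description precedes it below -/
import Mathlib

section
/- For a two-step path map α : I_2 → G with arrows α_1, α_2, the iterated integral satisfies ∫_α ω_1···ω_r = Σ_{k=0}^{r} ⟨ω_1,α_1⟩···⟨ω_k,α_1⟩⟨ω_{k+1},α_2⟩···⟨ω_r,α_2⟩ / (k!(r-k)!). -/
open Finset

attribute [local instance] Classical.propDecidable

/-- A digraph: vertex type `V`, arrow relation without self-loops. -/
structure Digraph' (V : Type*) where
  Arrow : V → V → Prop
  irrefl : ∀ v, ¬ Arrow v v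

/-- A step of a path map: an arrow `a → b` traversed forward, an arrow `a → b`
traversed backward (from `b` to `a`), or a trivial arrow at a vertex. -/
inductive PStep (V : Type*) where
  | fwd : V → V → PStep V
  | bwd : V → V → PStep V
  | triv : V → PStep V

namespace PStep
variable {V : Type*}

def src : PStep V → V
  | fwd a _ => a
  | bwd _ b => b
  | triv a => a

def tgt : PStep V → V
  | fwd _ b => b
  | bwd a _ => a
  | triv a => a

/-- The step uses an actual arrow of `G` (or is trivial). -/
def ok (G : Digraph' V) : PStep V → Prop
  | fwd a b => G.Arrow a b
  | bwd a b => G.Arrow a b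
  | triv _ => True

/-- The inverse step. -/
def inv : PStep V → PStep V
  | fwd a b => bwd a b
  | bwd a b => fwd a b
  | triv a => triv a

/-- Pairing `⟨ω, s⟩` of a 1-form with a step: `ω(a)` forward, `-ω(a)` backward,
`0` on trivial arrows. -/
def pair {K : Type*} [Field K] (ω : V → V → K) : PStep V → K
  | fwd a b => ω a b
  | bwd a b => - ω a b
  | triv _ => 0

end PStep

/-- `σ 1, …, σ n` are the steps of a path map `I_n → G`. -/
def IsPathMap {V : Type*} (G : Digraph' V) (n : ℕ) (σ : ℕ → PStep V) : Prop :=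
  (∀ t, 1 ≤ t → t ≤ n → (σ t).ok G) ∧
  (∀ t, 1 ≤ t → t < n → (σ t).tgt = (σ (t + 1)).src)

/-- Volume number of a finite sequence: product of factorials of multiplicities. -/
def volFin {r : ℕ} (g : Fin r → ℕ) : ℕ :=
  ∏ k ∈ Finset.image g Finset.univ,
    Nat.factorial ((Finset.univ.filter (fun j => g j = k)).card)

/-- The iterated integral `∫_α ω_1 ⋯ ω_r` along a path map of length `n`
with steps `σ 1, …, σ n`. -/
noncomputable def iint (K : Type*) [Field K] {V : Type*} (n : ℕ) (σ : ℕ → PStep V)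
    (r : ℕ) (ω : Fin r → V → V → K) : K :=
  ∑ f ∈ Finset.univ.filter (fun f : Fin r → Fin n => Monotone f),
    (∏ i, PStep.pair (ω i) (σ ((f i : ℕ) + 1))) / (volFin (fun i => (f i : ℕ)) : K)

/-- Concatenation of step sequences: the first `n` steps from `σ`, then steps of `τ`. -/
def concatP {V : Type*} (n : ℕ) (σ τ : ℕ → PStep V) : ℕ → PStep V :=
  fun t => if t ≤ n then σ t else τ (t - n)

/-- The inverse path map of a path map of length `n`. -/
def invP {V : Type*} (n : ℕ) (σ : ℕ → PStep V) : ℕ → PStep V :=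
  fun t => (σ (n + 1 - t)).inv

/-- Multiplicity of the value `k` in the (1-indexed) sequence `t 1, …, t r`. -/
def multN (t : ℕ → ℕ) (r k : ℕ) : ℕ := ((Finset.Icc 1 r).filter (fun j => t j = k)).card

/-- Volume number of the sequence `t 1, …, t r`: the product over all `k` of
the factorial of the multiplicity of `k`. -/
noncomputable def volN (t : ℕ → ℕ) (r : ℕ) : ℕ := ∏ᶠ k, Nat.factorial (multN t r k)

/-! A monotone map `{1, …, r} → {1, 2}` is determined by the number `k` of indices it sends to `1`:
it is the step function jumping at `k`. Its multiplicities are `k` and `r - k`, so its term in the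
iterated integral is the `k`-th term of the sum, and summing over monotone maps is summing
over `k ∈ {0, …, r}`. -/

def stepAt (r k : ℕ) : Fin r → Fin 2 := fun i => if (i : ℕ) < k then 0 else 1

lemma monotone_stepAt (r k : ℕ) : Monotone (stepAt r k) := by
  intro a b hab
  simp only [stepAt]
  split_ifs <;> first | exact le_rfl | exact Fin.zero_le _ | omega

lemma card_stepAt_eq_zero {r k : ℕ} (hk : k ≤ r) : #{i | stepAt r k i = 0} = k := by
  have : univ.filter (stepAt r k · = 0) = univ.filter fun i : Fin r => (i : ℕ) < k := by
    ext i
    simp [stepAt]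
  rw [this, Fin.card_filter_val_lt, min_eq_right hk]

lemma stepAt_card_eq_zero_of_monotone {r : ℕ} {f : Fin r → Fin 2} (hf : Monotone f) :
    stepAt r #{i | f i = 0} = f := by
  funext i
  have hzero : (i : ℕ) < #{j | f j = 0} ↔ f i = 0 :=
    Fin.lt_card_filter_univ_iff_apply_of_imp _ fun a b hba ha =>
      Fin.le_zero_iff.mp (ha ▸ hf hba)
  simp only [stepAt, hzero]
  split_ifs with h
  · exact h.symm
  · exact (Fin.eq_one_of_ne_zero _ h).symm

lemma volFin_eq_prod_of_image_subset {r : ℕ} {g : Fin r → ℕ} {s : Finset ℕ}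
    (hs : image g univ ⊆ s) : volFin g = ∏ k ∈ s, (#{j | g j = k}).factorial := by
  refine prod_subset hs fun k _ hk => ?_
  rw [filter_eq_empty_iff.mpr fun j _ (hj : g j = k) => hk (hj ▸ mem_image_of_mem g (mem_univ j)),
    card_empty, Nat.factorial_zero]

lemma volFin_val_fin_two {r : ℕ} (f : Fin r → Fin 2) :
    volFin (fun i => (f i : ℕ)) = (#{j | f j = 0}).factorial * (r - #{j | f j = 0}).factorial := by
  have himage : image (fun i => (f i : ℕ)) univ ⊆ {0, 1} := by
    intro x hx
    obtain ⟨j, -, rfl⟩ := mem_image.mp hx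
    have := (f j).isLt
    simp only [mem_insert, mem_singleton]
    omega
  have hone : univ.filter (fun j => (f j : ℕ) = 1) = univ.filter (fun j => ¬ f j = 0) := by
    ext j
    have := (f j).isLt
    simp only [mem_filter, mem_univ, true_and, Fin.ext_iff, Fin.val_zero]
    omega
  rw [volFin_eq_prod_of_image_subset himage, prod_pair zero_ne_one, hone,
    filter_not, card_univ_sdiff, Fintype.card_fin]
  simp only [Fin.val_eq_zero_iff]

lemma prod_stepAt {M : Type*} [CommMonoid M] {r : ℕ} (k : ℕ) (x : Fin r → ℕ → M) :
    ∏ i, x i ((stepAt r k i : ℕ) + 1) =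
      (∏ i ∈ univ.filter (fun i : Fin r => (i : ℕ) < k), x i 1) *
        ∏ i ∈ univ.filter (fun i : Fin r => k ≤ (i : ℕ)), x i 2 := by
  rw [← prod_filter_mul_prod_filter_not univ (fun i : Fin r => (i : ℕ) < k)]
  simp only [not_lt]
  congr 1 <;> refine prod_congr rfl fun i hi => ?_ <;> replace hi := (mem_filter.mp hi).2
  · simp [stepAt, hi]
  · simp [stepAt, not_lt.mpr hi]

theorem stmt4_general {V : Type*} (K : Type*) [Field K]
    (σ : ℕ → PStep V) (r : ℕ) (ω : Fin r → V → V → K) :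
    iint K 2 σ r ω = ∑ k ∈ Finset.range (r + 1),
      ((∏ i ∈ Finset.univ.filter (fun i : Fin r => (i : ℕ) < k), PStep.pair (ω i) (σ 1)) *
        ∏ i ∈ Finset.univ.filter (fun i : Fin r => k ≤ (i : ℕ)), PStep.pair (ω i) (σ 2)) /
        ((Nat.factorial k : K) * (Nat.factorial (r - k) : K)) := by
  rw [iint, eq_comm]
  refine sum_nbij' (stepAt r) (fun f => #{i | f i = 0}) ?_ ?_ ?_ ?_ ?_
  · intro k _
    simpa using monotone_stepAt r k
  · intro f _
    simpa [Nat.lt_succ_iff] using card_filter_le univ (f · = 0)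
  · intro k hk
    exact card_stepAt_eq_zero (Nat.lt_succ_iff.mp (mem_range.mp hk))
  · intro f hf
    exact stepAt_card_eq_zero_of_monotone (mem_filter.mp hf).2
  · intro k hk
    rw [prod_stepAt k fun i t => PStep.pair (ω i) (σ t), volFin_val_fin_two,
      card_stepAt_eq_zero (Nat.lt_succ_iff.mp (mem_range.mp hk))]
    push_cast
    rfl

/-- For a two-step path map `α : I_2 → G`,
`∫_α ω_1⋯ω_r = Σ_{k=0}^r ⟨ω_1,α_1⟩⋯⟨ω_k,α_1⟩⟨ω_{k+1},α_2⟩⋯⟨ω_r,α_2⟩/(k!(r-k)!)`. -/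
theorem stmt4 {V : Type*} (K : Type*) [Field K] [CharZero K] (G : Digraph' V)
    (σ : ℕ → PStep V) (h : IsPathMap G 2 σ) (r : ℕ) (ω : Fin r → V → V → K) :
    iint K 2 σ r ω = ∑ k ∈ Finset.range (r + 1),
      ((∏ i ∈ Finset.univ.filter (fun i : Fin r => (i : ℕ) < k), PStep.pair (ω i) (σ 1)) *
        ∏ i ∈ Finset.univ.filter (fun i : Fin r => k ≤ (i : ℕ)), PStep.pair (ω i) (σ 2)) /
        ((Nat.factorial k : K) * (Nat.factorial (r - k) : K)) :=
  stmt4_general K σ r ω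
end

section
/- Concatenation formula for iterated integrals: if α : I_n → G and β : I_m → G are path maps with α(n) = β(0), then ∫_{α⋆β} ω_1···ω_r = Σ_{i=0}^{r} (∫_α ω_1···ω_i)(∫_β ω_{i+1}···ω_r), where the empty integral (i=0 or i=r factor with no forms) equals 1. -/
/-! A monotone index sequence `t₁ ≤ ⋯ ≤ t_r` into the `n + m` steps of `α ⋆ β` splits
uniquely, at `i = #{j | t_j ≤ n}`, into a monotone sequence into the steps of `α` followed by
one into the (shifted) steps of `β`. The product of pairings factors along this split, and
because the two halves take disjoint values, so does the volume number. -/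

open Finset

attribute [local instance] Classical.propDecidable

theorem Fin.card_filter_univ_add {i k : ℕ} (p : Fin (i + k) → Prop) [DecidablePred p] :
    #{j | p j} = #{j | p (Fin.castAdd k j)} + #{j | p (Fin.natAdd i j)} := by
  simp only [card_filter]
  exact Fin.sum_univ_add _

theorem Fin.lt_card_filter_iff {r : ℕ} {p : Fin r → Prop} [DecidablePred p]
    (hp : ∀ ⦃a b⦄, a ≤ b → p b → p a) (j : Fin r) : (j : ℕ) < #{k | p k} ↔ p j := by
  constructor
  · intro hj
    by_contra hpj
    have hsub : ({k | p k} : Finset (Fin r)) ⊆ Iio j := fun k hk =>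
      mem_Iio.2 (lt_of_not_ge fun hjk => hpj (hp hjk (mem_filter.1 hk).2))
    have := card_le_card hsub
    rw [Fin.card_Iio] at this
    omega
  · intro hpj
    have hsub : Iic j ⊆ ({k | p k} : Finset (Fin r)) := fun k hk =>
      mem_filter.2 ⟨mem_univ _, hp (mem_Iic.1 hk) hpj⟩
    have := card_le_card hsub
    rw [Fin.card_Iic] at this
    omega

theorem Fin.monotone_append_castAdd_natAdd_iff {i k n m : ℕ}
    {g : Fin i → Fin n} {h : Fin k → Fin m} :
    Monotone (Fin.append (Fin.castAdd m ∘ g) (Fin.natAdd n ∘ h)) ↔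
      Monotone g ∧ Monotone h := by
  constructor
  · intro hf
    refine ⟨fun a b hab => ?_, fun a b hab => ?_⟩
    · simpa [(Fin.strictMono_castAdd m).le_iff_le] using
        hf ((Fin.strictMono_castAdd k).monotone hab)
    · simpa using hf ((Fin.natAdd_le_natAdd_iff i).2 hab)
  · rintro ⟨hg, hh⟩ a b hab
    induction a using Fin.addCases <;> induction b using Fin.addCases
    · simpa [(Fin.strictMono_castAdd m).le_iff_le] using
        hg ((Fin.strictMono_castAdd k).le_iff_le.1 hab)
    · simp only [Fin.append_left, Fin.append_right, Function.comp_apply, Fin.le_def,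
        Fin.val_castAdd, Fin.val_natAdd]
      omega
    · simp only [Fin.le_def, Fin.val_natAdd, Fin.val_castAdd] at hab
      omega
    · simpa using hh (by simpa using hab)

theorem volFin_comp_injective {r : ℕ} {e : ℕ → ℕ} (he : Function.Injective e)
    (c : Fin r → ℕ) :
    volFin (e ∘ c) = volFin c := by
  unfold volFin
  rw [← image_image, prod_image he.injOn]
  refine prod_congr rfl fun x _ => ?_
  simp only [Function.comp_apply, he.eq_iff]

theorem volFin_append {i k : ℕ} (a : Fin i → ℕ) (b : Fin k → ℕ)
    (hab : ∀ x y, a x ≠ b y) :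
    volFin (Fin.append a b) = volFin a * volFin b := by
  unfold volFin
  have himage : image (Fin.append a b) univ = image a univ ∪ image b univ := by
    ext x
    simp only [mem_image, mem_union, mem_univ, true_and]
    constructor
    · rintro ⟨j, rfl⟩
      induction j using Fin.addCases <;> simp
    · rintro (⟨j, rfl⟩ | ⟨j, rfl⟩)
      exacts [⟨_, Fin.append_left a b j⟩, ⟨_, Fin.append_right a b j⟩]
  have hdisj : Disjoint (image a univ) (image b univ) := by
    simp only [disjoint_left, mem_image, mem_univ, true_and]
    rintro _ ⟨x, rfl⟩ ⟨y, hy⟩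
    exact hab x y hy.symm
  have hfiber (v : ℕ) : #{j | Fin.append a b j = v} = #{j | a j = v} + #{j | b j = v} := by
    simp only [Fin.card_filter_univ_add, Fin.append_left, Fin.append_right]
  rw [himage, prod_union hdisj]
  congr 1
  · refine prod_congr rfl fun _ hv => ?_
    obtain ⟨x, -, rfl⟩ := mem_image.1 hv
    simp [hfiber, Ne.symm (hab _ _)]
  · refine prod_congr rfl fun _ hv => ?_
    obtain ⟨y, -, rfl⟩ := mem_image.1 hv
    simp [hfiber, hab]

theorem Fin.append_castAdd_natAdd_injective (i k n m : ℕ) :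
    Function.Injective fun gh : (Fin i → Fin n) × (Fin k → Fin m) =>
      Fin.append (Fin.castAdd m ∘ gh.1) (Fin.natAdd n ∘ gh.2) := by
  intro gh gh' heq
  have hleft (j : Fin i) := congrFun heq (Fin.castAdd k j)
  have hright (j : Fin k) := congrFun heq (Fin.natAdd i j)
  simp only [Fin.append_left, Fin.append_right, Function.comp_apply,
    (Fin.castAdd_injective _ _).eq_iff, (Fin.natAdd_injective _ _).eq_iff] at hleft hright
  exact Prod.ext (funext hleft) (funext hright)

theorem filter_monotone_card_filter_lt_eq_image (n m i k : ℕ) :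
    {f ∈ univ.filter (fun f : Fin (i + k) → Fin (n + m) => Monotone f) |
        #{j | (f j : ℕ) < n} = i} =
      ((univ.filter Monotone) ×ˢ (univ.filter Monotone)).image
        (fun gh : (Fin i → Fin n) × (Fin k → Fin m) =>
          Fin.append (Fin.castAdd m ∘ gh.1) (Fin.natAdd n ∘ gh.2)) := by
  ext f
  simp only [mem_filter, mem_image, mem_product, mem_univ, true_and, Prod.exists]
  constructor
  · rintro ⟨hf, hcard⟩
    have hsplit (j : Fin (i + k)) : (j : ℕ) < i ↔ (f j : ℕ) < n := by
      have := Fin.lt_card_filter_iff (p := fun j => (f j : ℕ) < n)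
        (fun _ _ hab hb => lt_of_le_of_lt (hf hab) hb) j
      rwa [hcard] at this
    let g : Fin i → Fin n := fun j => Fin.castLT (f (Fin.castAdd k j)) ((hsplit _).1 j.2)
    let h : Fin k → Fin m := fun j =>
      ⟨f (Fin.natAdd i j) - n, by
        have := (hsplit (Fin.natAdd i j)).not.1 (by simp)
        omega⟩
    have hfgh : Fin.append (Fin.castAdd m ∘ g) (Fin.natAdd n ∘ h) = f := by
      funext x
      induction x using Fin.addCases with
      | left j => simp [g]
      | right j =>
        have := (hsplit (Fin.natAdd i j)).not.1 (by simp)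
        ext
        simp only [Fin.append_right, Function.comp_apply, Fin.val_natAdd, h]
        omega
    rw [← hfgh] at hf
    exact ⟨g, h, Fin.monotone_append_castAdd_natAdd_iff.1 hf, hfgh⟩
  · rintro ⟨g, h, ⟨hg, hh⟩, rfl⟩
    refine ⟨Fin.monotone_append_castAdd_natAdd_iff.2 ⟨hg, hh⟩, ?_⟩
    simp [Fin.card_filter_univ_add]

noncomputable def iintSummand (K : Type*) [Field K] {V : Type*} {r N : ℕ} (σ : ℕ → PStep V)
    (ω : Fin r → V → V → K) (f : Fin r → Fin N) : K :=
  (∏ j, PStep.pair (ω j) (σ ((f j : ℕ) + 1))) / (volFin (fun j => (f j : ℕ)) : K)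

theorem iint_eq_sum_iintSummand (K : Type*) [Field K] {V : Type*} (n : ℕ) (σ : ℕ → PStep V)
    (r : ℕ) (ω : Fin r → V → V → K) :
    iint K n σ r ω =
      ∑ f ∈ univ.filter (fun f : Fin r → Fin n => Monotone f), iintSummand K σ ω f :=
  rfl

section Concatenation

variable {V : Type*} (n : ℕ) (σ τ : ℕ → PStep V)

theorem concatP_of_le {t : ℕ} (ht : t ≤ n) : concatP n σ τ t = σ t := if_pos ht

theorem concatP_add_succ (t : ℕ) : concatP n σ τ (n + t + 1) = τ (t + 1) := by
  simp only [concatP, if_neg (show ¬ n + t + 1 ≤ n by omega)]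
  congr 1
  omega

variable (K : Type*) [Field K] {m i k : ℕ}

theorem iintSummand_concatP_append (ω : Fin (i + k) → V → V → K) (g : Fin i → Fin n)
    (h : Fin k → Fin m) :
    iintSummand K (concatP n σ τ) ω (Fin.append (Fin.castAdd m ∘ g) (Fin.natAdd n ∘ h)) =
      iintSummand K σ (ω ∘ Fin.castAdd k) g * iintSummand K τ (ω ∘ Fin.natAdd i) h := by
  set f := Fin.append (Fin.castAdd m ∘ g) (Fin.natAdd n ∘ h)
  have hvol : volFin (fun j => (f j : ℕ)) =
      volFin (fun j => (g j : ℕ)) * volFin (fun j => (h j : ℕ)) := by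
    have hvalues : (fun j => (f j : ℕ)) =
        Fin.append (fun j => (g j : ℕ)) ((n + ·) ∘ fun j => (h j : ℕ)) := by
      funext x
      induction x using Fin.addCases <;> simp [f]
    rw [hvalues, volFin_append _ _ (fun x y => by simp; omega),
      volFin_comp_injective (add_right_injective n)]
  rw [iintSummand, hvol, Nat.cast_mul, Fin.prod_univ_add, mul_div_mul_comm]
  congr 3 <;> funext j
  · simp [f, concatP_of_le n σ τ (show (g j : ℕ) + 1 ≤ n by omega)]
  · simp [f, concatP_add_succ]

theorem sum_iintSummand_concatP_fiber (hr : i + k = r) (ω : Fin r → V → V → K) :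
    ∑ f ∈ {f ∈ univ.filter (fun f : Fin r → Fin (n + m) => Monotone f) |
        #{j | (f j : ℕ) < n} = i}, iintSummand K (concatP n σ τ) ω f =
      iint K n σ i (fun j => ω (Fin.castLE (by omega) j)) *
        iint K m τ k (fun j => ω ⟨i + j, by omega⟩) := by
  subst hr
  rw [filter_monotone_card_filter_lt_eq_image,
    sum_image (Fin.append_castAdd_natAdd_injective i k n m).injOn,
    iint_eq_sum_iintSummand, iint_eq_sum_iintSummand, sum_mul_sum, ← sum_product']
  exact sum_congr rfl fun gh _ => iintSummand_concatP_append n σ τ K ω gh.1 gh.2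

end Concatenation

/-- Concatenation formula:
`∫_{α⋆β} ω_1⋯ω_r = Σ_{i=0}^r (∫_α ω_1⋯ω_i)(∫_β ω_{i+1}⋯ω_r)`. -/
theorem stmt5 {V : Type*} (K : Type*) [Field K]
    (n m : ℕ) (σ τ : ℕ → PStep V)
    (r : ℕ) (ω : Fin r → V → V → K) :
    iint K (n + m) (concatP n σ τ) r ω =
      ∑ i : Fin (r + 1),
        iint K n σ i (fun j => ω (Fin.castLE (Nat.lt_succ_iff.mp i.isLt) j)) *
        iint K m τ (r - i) (fun j => ω ⟨(i : ℕ) + (j : ℕ), by have := j.isLt; omega⟩) := by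
  have hcard_le (f : Fin r → Fin (n + m)) : #{j | (f j : ℕ) < n} < r + 1 :=
    Nat.lt_succ_of_le ((card_filter_le _ _).trans_eq (card_fin r))
  rw [iint_eq_sum_iintSummand, ← sum_fiberwise _ fun f => (⟨_, hcard_le f⟩ : Fin (r + 1))]
  refine sum_congr rfl fun i _ => ?_
  simp only [Fin.ext_iff]
  exact sum_iintSummand_concatP_fiber n σ τ K (by omega) ω
end

section
/- Iterated integrals are invariant under inserting a trivial arrow: if α : I_n → G is a path map and α̂^i : I_{n+1} → G is obtained from α by inserting a trivial (constant) arrow between the i-th and (i+1)-th vertices, then ∫_{α̂^i} ω_1···ω_r = ∫_α ω_1···ω_r for all 1-forms ω_1,...,ω_r. -/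
open Finset

attribute [local instance] Classical.propDecidable

/-
Write `α̂` for `α` with a step `s` inserted after the `p`-th one, `s` pairing to zero with every
`ωᵢ`. A monotone `f : Fin r → Fin (n+1)` that hits the inserted position contributes a product
with a zero factor; those avoiding it are exactly `p.succAbove ∘ g` with `g : Fin r → Fin n`
monotone. This correspondence maps the steps used by `g` on `α` to the same steps on `α̂`, and the
volume number only depends on the pattern of equal values, which the injective relabelling keeps.
-/

lemma volFin_comp_of_injOn {r : ℕ} (g : Fin r → ℕ) {e : ℕ → ℕ} (he : Set.InjOn e (Set.range g)) :
    volFin (fun i => e (g i)) = volFin g := by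
  have himg : univ.image (fun i => e (g i)) = (univ.image g).image e := by
    rw [image_image]; rfl
  unfold volFin
  rw [himg, prod_image (by simpa [Set.InjOn] using he)]
  refine prod_congr rfl fun k hk => ?_
  obtain ⟨j, -, rfl⟩ := mem_image.mp hk
  congr 2
  exact filter_congr fun i _ => he.eq_iff ⟨i, rfl⟩ ⟨j, rfl⟩

lemma Fin.val_succAbove {n : ℕ} (p : Fin (n + 1)) (j : Fin n) :
    (p.succAbove j : ℕ) = if (j : ℕ) < p then (j : ℕ) else (j : ℕ) + 1 := by
  unfold Fin.succAbove
  split_ifs <;> simp_all [Fin.lt_def]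

noncomputable def iintTerm (K : Type*) [Field K] {V : Type*} {n r : ℕ} (σ : ℕ → PStep V)
    (ω : Fin r → V → V → K) (f : Fin r → Fin n) : K :=
  (∏ i, PStep.pair (ω i) (σ ((f i : ℕ) + 1))) / (volFin (fun i => (f i : ℕ)) : K)

lemma iint_eq_sum_iintTerm (K : Type*) [Field K] {V : Type*} (n : ℕ) (σ : ℕ → PStep V)
    (r : ℕ) (ω : Fin r → V → V → K) :
    iint K n σ r ω = ∑ f ∈ univ.filter (fun f : Fin r → Fin n => Monotone f), iintTerm K σ ω f :=
  rfl

def insertStep {V : Type*} (σ : ℕ → PStep V) (p : ℕ) (s : PStep V) : ℕ → PStep V :=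
  fun t => if t ≤ p then σ t else if t = p + 1 then s else σ (t - 1)

section insertStep

variable {V : Type*} (σ : ℕ → PStep V) (s : PStep V)

lemma insertStep_succ_self (p : ℕ) : insertStep σ p s (p + 1) = s := by
  simp [insertStep]

lemma insertStep_succAbove_succ {n : ℕ} (p : Fin (n + 1)) (j : Fin n) :
    insertStep σ p s (p.succAbove j + 1) = σ (j + 1) := by
  rw [Fin.val_succAbove]
  unfold insertStep
  split_ifs <;> first | rfl | omega

variable (K : Type*) [Field K] {r : ℕ} (ω : Fin r → V → V → K)

lemma iintTerm_insertStep_succAbove_comp {n : ℕ} (p : Fin (n + 1)) (g : Fin r → Fin n) :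
    iintTerm K (insertStep σ p s) ω (p.succAbove ∘ g) = iintTerm K σ ω g := by
  unfold iintTerm
  congr 1
  · exact prod_congr rfl fun i _ => congrArg _ (insertStep_succAbove_succ σ s p (g i))
  · have hinj : Set.InjOn (fun x : ℕ => if x < (p : ℕ) then x else x + 1)
        (Set.range fun i => (g i : ℕ)) := fun a _ b _ => by dsimp only; split_ifs <;> omega
    simp only [Function.comp_apply, Fin.val_succAbove]
    rw [volFin_comp_of_injOn _ hinj]

lemma iintTerm_insertStep_eq_zero {n : ℕ} (hs : ∀ i, s.pair (ω i) = 0) {p : Fin n}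
    {f : Fin r → Fin n} {i : Fin r} (hi : f i = p) :
    iintTerm K (insertStep σ p s) ω f = 0 := by
  unfold iintTerm
  rw [prod_eq_zero (mem_univ i) (by rw [hi, insertStep_succ_self, hs]), zero_div]

theorem iint_insertStep {n p : ℕ} (hp : p ≤ n) (hs : ∀ i, s.pair (ω i) = 0) :
    iint K (n + 1) (insertStep σ p s) r ω = iint K n σ r ω := by
  set P : Fin (n + 1) := ⟨p, Nat.lt_succ_of_le hp⟩
  have hmono : StrictMono P.succAbove := Fin.strictMono_succAbove P
  simp only [iint_eq_sum_iintTerm]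
  symm
  refine sum_bij_ne_zero (fun g _ _ => P.succAbove ∘ g) ?_ ?_ ?_ ?_
  · intro g hg _
    exact (mem_filter_univ _).mpr (hmono.monotone.comp ((mem_filter_univ g).mp hg))
  · intro g₁ _ _ g₂ _ _ h
    exact Fin.succAbove_right_injective.comp_left h
  · intro f hf hf0
    have hfP : ∀ i, f i ≠ P := fun i hi => hf0 (iintTerm_insertStep_eq_zero σ s K ω hs hi)
    choose g hg using fun i => Fin.exists_succAbove_eq (hfP i)
    have hfg : P.succAbove ∘ g = f := funext hg
    have hgmono : Monotone g := fun a b hab =>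
      hmono.le_iff_le.mp (by simpa [hg] using (mem_filter_univ f).mp hf hab)
    refine ⟨g, (mem_filter_univ g).mpr hgmono, ?_, hfg⟩
    rwa [← iintTerm_insertStep_succAbove_comp σ s K ω P, hfg]
  · intro g _ _
    exact (iintTerm_insertStep_succAbove_comp σ s K ω P g).symm

end insertStep

theorem stmt6_general {V : Type*} (K : Type*) [Field K]
    (n : ℕ) (σ : ℕ → PStep V) (p : ℕ) (hp : p ≤ n) (v : V)
    (r : ℕ) (ω : Fin r → V → V → K) :
    iint K (n + 1)
      (fun t => if t ≤ p then σ t else if t = p + 1 then PStep.triv v else σ (t - 1)) r ω =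
    iint K n σ r ω :=
  iint_insertStep σ (.triv v) K ω hp fun _ => rfl

/-- Iterated integrals are invariant under inserting a trivial arrow between the
`p`-th and `(p+1)`-th vertices of a path map. -/
theorem stmt6 {V : Type*} (K : Type*) [Field K] [CharZero K] (G : Digraph' V)
    (n : ℕ) (σ : ℕ → PStep V) (h : IsPathMap G n σ) (p : ℕ) (hp : p ≤ n) (v : V)
    (hv : v = if p = 0 then (σ 1).src else (σ p).tgt)
    (r : ℕ) (ω : Fin r → V → V → K) :
    iint K (n + 1)
      (fun t => if t ≤ p then σ t else if t = p + 1 then PStep.triv v else σ (t - 1)) r ω =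
    iint K n σ r ω :=
  stmt6_general K n σ p hp v r ω
end

section
/- Inverse-path formula: for a path map α : I_n → G, the iterated integral along the inverse path satisfies ∫_{α^{-1}} ω_1···ω_r = (-1)^r ∫_α ω_r···ω_1. -/
open Finset

attribute [local instance] Classical.propDecidable

lemma pair_inv {V K : Type*} [Field K] (ω : V → V → K) (s : PStep V) :
    PStep.pair ω s.inv = - PStep.pair ω s := by
  cases s <;> simp [PStep.pair, PStep.inv]

open Finset in
lemma volFin_comp_inj {r n : ℕ} (f : Fin r → Fin n) (v : Fin n → ℕ)
    (hv : Function.Injective v) :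
    volFin (fun i => v (f i)) = ∏ k ∈ Finset.image f Finset.univ,
      Nat.factorial ((Finset.univ.filter (fun j => f j = k)).card) := by
  classical
  unfold volFin
  have himg : Finset.image (fun i => v (f i)) Finset.univ
      = Finset.image v (Finset.image f Finset.univ) := by
    rw [Finset.image_image]; rfl
  rw [himg, Finset.prod_image (fun x _ y _ hxy => hv hxy)]
  refine Finset.prod_congr rfl fun k _ => ?_
  congr 1
  refine (Finset.card_bij (fun j _ => j) ?_ ?_ ?_).symm
  · intro j hj; simp only [Finset.mem_filter, Finset.mem_univ, true_and] at hj ⊢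
    exact congrArg v hj
  · intro a b _ _ hab; exact hab
  · intro j hj; simp only [Finset.mem_filter, Finset.mem_univ, true_and] at hj ⊢
    exact ⟨j, hv hj, rfl⟩

open Finset in
lemma volFin_revrev {r n : ℕ} (f : Fin r → Fin n) :
    volFin (fun i => (((f i.rev).rev : Fin n) : ℕ)) = volFin (fun i => ((f i : Fin n) : ℕ)) := by
  classical
  have h1 := volFin_comp_inj (fun i => f i.rev) (fun x => (x.rev : ℕ))
    (Fin.val_injective.comp Fin.rev_injective)
  have h2 := volFin_comp_inj f (fun x => (x : ℕ)) Fin.val_injective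
  rw [h1, h2]
  have himg : Finset.image (fun i : Fin r => f i.rev) Finset.univ = Finset.image f Finset.univ := by
    rw [show (fun i : Fin r => f i.rev) = f ∘ Fin.rev from rfl, ← Finset.image_image,
      Finset.image_univ_of_surjective Fin.rev_surjective]
  rw [himg]
  refine Finset.prod_congr rfl fun k _ => ?_
  congr 1
  refine Finset.card_bij' (fun j _ => j.rev) (fun j _ => j.rev) ?_ ?_ ?_ ?_
  · intro j hj; simp only [Finset.mem_filter, Finset.mem_univ, true_and] at hj ⊢
    exact hj
  · intro j hj; simp only [Finset.mem_filter, Finset.mem_univ, true_and] at hj ⊢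
    simpa [Fin.rev_rev] using hj
  · intro j _; exact Fin.rev_rev j
  · intro j _; exact Fin.rev_rev j

/-- Inverse-path formula: `∫_{α⁻¹} ω_1⋯ω_r = (-1)^r ∫_α ω_r⋯ω_1`. -/
theorem stmt7 {V : Type*} (K : Type*) [Field K] [CharZero K] (G : Digraph' V)
    (n : ℕ) (σ : ℕ → PStep V) (h : IsPathMap G n σ)
    (r : ℕ) (ω : Fin r → V → V → K) :
    iint K n (invP n σ) r ω = (-1 : K) ^ r * iint K n σ r (fun i => ω i.rev) := by
  classical
  unfold iint
  rw [Finset.mul_sum]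
  refine Finset.sum_nbij' (fun f j => (f j.rev).rev) (fun g j => (g j.rev).rev)
    ?_ ?_ ?_ ?_ ?_
  · intro f hf
    simp only [Finset.mem_filter, Finset.mem_univ, true_and] at hf ⊢
    intro a b hab
    exact Fin.rev_le_rev.2 (hf (Fin.rev_le_rev.2 hab))
  · intro g hg
    simp only [Finset.mem_filter, Finset.mem_univ, true_and] at hg ⊢
    intro a b hab
    exact Fin.rev_le_rev.2 (hg (Fin.rev_le_rev.2 hab))
  · intro f _; funext j; simp [Fin.rev_rev]
  · intro g _; funext j; simp [Fin.rev_rev]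
  · intro f _
    have hstep : ∀ i : Fin r, invP n σ ((f i : ℕ) + 1) = (σ (((f i).rev : ℕ) + 1)).inv := by
      intro i
      unfold invP
      congr 2
      have := (f i).isLt
      rw [Fin.val_rev]
      omega
    have hprod : (∏ i, PStep.pair (ω i) (invP n σ ((f i : ℕ) + 1)))
        = (-1 : K) ^ r * ∏ i, PStep.pair (ω i) (σ (((f i).rev : ℕ) + 1)) := by
      calc (∏ i, PStep.pair (ω i) (invP n σ ((f i : ℕ) + 1)))
          = ∏ i, (-1 : K) * PStep.pair (ω i) (σ (((f i).rev : ℕ) + 1)) := by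
            refine Finset.prod_congr rfl fun i _ => ?_
            rw [hstep i, pair_inv]; ring
        _ = (-1 : K) ^ r * ∏ i, PStep.pair (ω i) (σ (((f i).rev : ℕ) + 1)) := by
            rw [Finset.prod_mul_distrib, Finset.prod_const]
            simp
    have hre : (∏ i, PStep.pair (ω i) (σ (((f i).rev : ℕ) + 1)))
        = ∏ i : Fin r, PStep.pair (ω i.rev) (σ ((((f i.rev).rev : Fin n) : ℕ) + 1)) := by
      have := Equiv.prod_comp (Fin.revPerm : Equiv.Perm (Fin r))
        (fun i : Fin r => PStep.pair (ω i.rev) (σ ((((f i.rev).rev : Fin n) : ℕ) + 1)))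
      rw [← this]
      refine Finset.prod_congr rfl fun i _ => ?_
      simp [Fin.rev_rev]
    rw [hprod, hre, volFin_revrev f]
    ring
end

section
/- Shuffle product formula: for any path map α on a digraph G and 1-forms ω_1,...,ω_{r+s}, the product of iterated integrals satisfies (∫_α ω_1···ω_r)(∫_α ω_{r+1}···ω_{r+s}) = Σ_σ ∫_α ω_{σ(1)}···ω_{σ(r+s)}, where σ ranges over all (r,s)-shuffles. -/
open Finset

attribute [local instance] Classical.propDecidable

/-!
Both sides are sums over monotone tuples weighted by inverse volume numbers, and the volume
number of a tuple is the order of its stabilizer in the symmetric group. A shuffle `e` together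
with a monotone `h : Fin (r + s) → Fin n` is the same as a pair of monotone tuples `f, g` with
`h ∘ e⁻¹ = Fin.append f g` together with `e`: then `h` is forced to be the sorted merge of `f`
and `g`. So the formula comes down to counting the shuffles `e` with
`merge f g ∘ e⁻¹ = Fin.append f g`, and there are `|Stab (merge f g)| / (|Stab f| |Stab g|)` of
them: every permutation `p` with `merge f g ∘ p = Fin.append f g` factors uniquely as `e⁻¹ ρ`
with `e` such a shuffle and `ρ` a block-preserving permutation fixing `Fin.append f g`. The
shuffle is found by stably sorting the block pattern of `p⁻¹`, and it is the monotonicity of `f`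
and `g` that makes it again carry `merge f g` to `Fin.append f g`.
-/

open Equiv

section Stabilizer

variable {ι α : Type*}

noncomputable def stabilizerCard (h : ι → α) : ℕ := Nat.card {p : Perm ι // h ∘ p = h}

theorem stabilizerCard_ne_zero [Finite ι] (h : ι → α) : stabilizerCard h ≠ 0 :=
  have : Nonempty {p : Perm ι // h ∘ p = h} := ⟨⟨1, rfl⟩⟩
  Nat.card_pos.ne'

theorem card_comp_eq_comp_perm (h : ι → α) (τ : Perm ι) :
    Nat.card {p : Perm ι // h ∘ p = h ∘ τ} = stabilizerCard h :=
  Nat.card_congr <| (Equiv.mulRight τ⁻¹).subtypeEquiv fun p => by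
    simp only [coe_mulRight, Perm.inv_def]
    exact (Equiv.comp_symm_eq τ _ _).symm

end Stabilizer

theorem volFin_eq_stabilizerCard {r : ℕ} (q : Fin r → ℕ) :
    volFin q = stabilizerCard q := by
  rw [stabilizerCard, Nat.card_eq_fintype_card, DomMulAct.stabilizer_card', volFin]
  simp only [Fintype.card_subtype]

theorem volFin_val_eq_stabilizerCard {r n : ℕ} (f : Fin r → Fin n) :
    volFin (fun i => (f i : ℕ)) = stabilizerCard f := by
  rw [volFin_eq_stabilizerCard]
  exact Nat.card_congr <| Equiv.subtypeEquivRight fun ρ =>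
    (Fin.val_injective.comp_left (α := Fin r)).eq_iff

section Shuffle

variable {r s : ℕ}

def IsShuffle (r s : ℕ) (e : Perm (Fin (r + s))) : Prop :=
  (∀ a b : Fin (r + s), (a : ℕ) < r → (b : ℕ) < r → a < b → e.symm a < e.symm b) ∧
  (∀ a b : Fin (r + s), r ≤ (a : ℕ) → r ≤ (b : ℕ) → a < b → e.symm a < e.symm b)

def blockOf (r : ℕ) {m : ℕ} (x : Fin m) : Bool := decide (r ≤ (x : ℕ))

theorem monotone_blockOf (m : ℕ) : Monotone (blockOf r (m := m)) := by
  intro a b hab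
  simp only [blockOf, Bool.le_iff_imp, decide_eq_true_eq]
  exact fun ha => ha.trans hab

theorem card_blockOf_eq_false : #{x : Fin (r + s) | blockOf r x = false} = r := by
  simp [blockOf, Fin.card_filter_val_lt]

theorem isShuffle_iff_symm_eq_sort (e : Perm (Fin (r + s))) :
    IsShuffle r s e ↔ e.symm = Tuple.sort (blockOf r ∘ e) := by
  have hcomp : blockOf r ∘ e ∘ e.symm = blockOf r := by simp
  rw [Tuple.eq_sort_iff, Function.comp_assoc, hcomp, and_iff_right (monotone_blockOf _)]
  simp only [Function.comp_apply, apply_symm_apply, blockOf]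
  constructor
  · rintro ⟨h₁, h₂⟩ a b hab hblk
    by_cases ha : r ≤ (a : ℕ)
    · exact h₂ a b ha (by simpa [ha] using hblk) hab
    · exact h₁ a b (by omega) (by simp_all) hab
  · intro h
    exact ⟨fun a b ha hb hab => h a b hab (by simp; omega),
      fun a b ha hb hab => h a b hab (by simp [ha, hb])⟩

theorem comp_sort_eq_blockOf {c : Fin (r + s) → Bool} (hc : #{x | c x = false} = r) :
    c ∘ Tuple.sort c = blockOf r := by
  funext j
  have hcard : #{i | (c ∘ Tuple.sort c) i ≤ false} = r := by
    refine (Finset.card_equiv (Tuple.sort c) fun i => ?_).trans hc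
    simp [Bool.le_iff_imp]
  have := Tuple.lt_card_le_iff_apply_le_of_monotone (j := j) (a := false) (Tuple.monotone_sort c)
  rw [hcard] at this
  simp only [blockOf]
  cases h : (c ∘ Tuple.sort c) j <;> simp_all [Bool.le_iff_imp]

def shuffleOf (π : Perm (Fin (r + s))) : Perm (Fin (r + s)) :=
  (Tuple.sort (blockOf r ∘ π)).symm

theorem blockOf_comp_shuffleOf (π : Perm (Fin (r + s))) :
    blockOf r ∘ shuffleOf π = blockOf r ∘ π := by
  have hcard : #{x | (blockOf r ∘ π) x = false} = r :=
    (Finset.card_equiv π (by simp)).trans card_blockOf_eq_false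
  rw [shuffleOf, Equiv.comp_symm_eq, comp_sort_eq_blockOf hcard]

theorem isShuffle_shuffleOf (π : Perm (Fin (r + s))) : IsShuffle r s (shuffleOf π) := by
  rw [isShuffle_iff_symm_eq_sort, blockOf_comp_shuffleOf, shuffleOf, symm_symm]

theorem IsShuffle.eq_shuffleOf {e π : Perm (Fin (r + s))} (he : IsShuffle r s e)
    (h : blockOf r ∘ e = blockOf r ∘ π) : e = shuffleOf π := by
  rw [shuffleOf, ← h, ← (isShuffle_iff_symm_eq_sort e).mp he, symm_symm]

theorem IsShuffle.strictMono_symm_castAdd {e : Perm (Fin (r + s))} (he : IsShuffle r s e) :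
    StrictMono (e.symm ∘ Fin.castAdd s) :=
  fun i j hij => he.1 _ _ (by simp) (by simp) (Fin.strictMono_castAdd s hij)

theorem IsShuffle.strictMono_symm_natAdd {e : Perm (Fin (r + s))} (he : IsShuffle r s e) :
    StrictMono (e.symm ∘ Fin.natAdd r) :=
  fun i j hij => he.2 _ _ (by simp) (by simp) (Fin.strictMono_natAdd r hij)

def blockPerm (ρ₁ : Perm (Fin r)) (ρ₂ : Perm (Fin s)) : Perm (Fin (r + s)) :=
  finSumFinEquiv.permCongr (ρ₁.sumCongr ρ₂)

@[simp]
theorem blockPerm_castAdd (ρ₁ : Perm (Fin r)) (ρ₂ : Perm (Fin s)) (i : Fin r) :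
    blockPerm ρ₁ ρ₂ (Fin.castAdd s i) = Fin.castAdd s (ρ₁ i) := by
  simp [blockPerm, permCongr_apply]

@[simp]
theorem blockPerm_natAdd (ρ₁ : Perm (Fin r)) (ρ₂ : Perm (Fin s)) (i : Fin s) :
    blockPerm ρ₁ ρ₂ (Fin.natAdd r i) = Fin.natAdd r (ρ₂ i) := by
  simp [blockPerm, permCongr_apply]

theorem blockPerm_injective :
    Function.Injective (fun ρ : Perm (Fin r) × Perm (Fin s) => blockPerm ρ.1 ρ.2) :=
  fun _ _ h => Perm.sumCongrHom_injective (finSumFinEquiv.permCongr.injective h)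

theorem append_comp_blockPerm {α : Type*} (f : Fin r → α) (g : Fin s → α)
    (ρ₁ : Perm (Fin r)) (ρ₂ : Perm (Fin s)) :
    Fin.append f g ∘ blockPerm ρ₁ ρ₂ = Fin.append (f ∘ ρ₁) (g ∘ ρ₂) := by
  funext x
  cases x using Fin.addCases <;> simp

theorem blockOf_comp_eq_iff (ρ : Perm (Fin (r + s))) :
    blockOf r ∘ ρ = blockOf r ↔ ∃ ρ₁ ρ₂, blockPerm ρ₁ ρ₂ = ρ := by
  constructor
  · intro h
    set σ : Perm (Fin r ⊕ Fin s) := finSumFinEquiv.symm.permCongr ρ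
    have hσ : Set.MapsTo σ (Set.range Sum.inl) (Set.range Sum.inl) := by
      rintro _ ⟨a, rfl⟩
      have hlt : (ρ (Fin.castAdd s a) : ℕ) < r := by
        simpa [blockOf, Nat.not_le.mpr a.isLt] using congrFun h (Fin.castAdd s a)
      refine ⟨⟨_, hlt⟩, ?_⟩
      simp [σ, permCongr_apply, ← finSumFinEquiv_symm_apply_castAdd, Fin.castAdd, Fin.castLE]
    obtain ⟨⟨ρ₁, ρ₂⟩, hρ⟩ := Perm.mem_sumCongrHom_range_of_perm_mapsTo_inl hσ
    refine ⟨ρ₁, ρ₂, ?_⟩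
    rw [blockPerm, ← Perm.sumCongrHom_apply (a := (ρ₁, ρ₂)), hρ]
    ext x
    simp [σ, permCongr_apply]
  · rintro ⟨ρ₁, ρ₂, rfl⟩
    funext x
    cases x using Fin.addCases <;> simp [blockOf, Nat.not_le.mpr (Fin.isLt _)]

end Shuffle

section Merge

variable {α : Type*} {r s : ℕ}

@[simp]
theorem Fin.append_comp_castAdd (f : Fin r → α) (g : Fin s → α) :
    Fin.append f g ∘ Fin.castAdd s = f :=
  funext (Fin.append_left f g)

@[simp]
theorem Fin.append_comp_natAdd (f : Fin r → α) (g : Fin s → α) :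
    Fin.append f g ∘ Fin.natAdd r = g :=
  funext (Fin.append_right f g)

theorem card_blockPreserving_stabilizer (f : Fin r → α) (g : Fin s → α) :
    Nat.card {ρ : Perm (Fin (r + s)) //
        blockOf r ∘ ρ = blockOf r ∧ Fin.append f g ∘ ρ = Fin.append f g} =
      stabilizerCard f * stabilizerCard g := by
  rw [stabilizerCard, stabilizerCard, ← Nat.card_prod]
  symm
  refine Nat.card_congr (Equiv.ofBijective
    (fun ρ => ⟨blockPerm ρ.1.1 ρ.2.1, (blockOf_comp_eq_iff _).mpr ⟨_, _, rfl⟩, ?_⟩) ⟨?_, ?_⟩)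
  · rw [append_comp_blockPerm, ρ.1.2, ρ.2.2]
  · intro ρ ρ' h
    have := blockPerm_injective (a₁ := (ρ.1.1, ρ.2.1)) (a₂ := (ρ'.1.1, ρ'.2.1))
      (congrArg Subtype.val h)
    ext1 <;> apply Subtype.ext
    exacts [congrArg Prod.fst this, congrArg Prod.snd this]
  · rintro ⟨ρ, hblk, hρ⟩
    obtain ⟨ρ₁, ρ₂, rfl⟩ := (blockOf_comp_eq_iff ρ).mp hblk
    rw [append_comp_blockPerm] at hρ
    refine ⟨(⟨ρ₁, ?_⟩, ⟨ρ₂, ?_⟩), rfl⟩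
    · simpa using congrArg (· ∘ Fin.castAdd s) hρ
    · simpa using congrArg (· ∘ Fin.natAdd r) hρ

variable [LinearOrder α]

def merge (f : Fin r → α) (g : Fin s → α) : Fin (r + s) → α :=
  Fin.append f g ∘ Tuple.sort (Fin.append f g)

theorem monotone_merge (f : Fin r → α) (g : Fin s → α) : Monotone (merge f g) :=
  Tuple.monotone_sort _

theorem merge_comp_symm_sort (f : Fin r → α) (g : Fin s → α) :
    merge f g ∘ (Tuple.sort (Fin.append f g)).symm = Fin.append f g := by
  simp [merge, Function.comp_assoc]

theorem eq_merge_of_comp_eq_append {f : Fin r → α} {g : Fin s → α} {h : Fin (r + s) → α}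
    (hh : Monotone h) {p : Perm (Fin (r + s))} (hp : h ∘ p = Fin.append f g) : h = merge f g := by
  rw [← Equiv.eq_comp_symm] at hp
  rw [hp] at hh ⊢
  exact Tuple.unique_monotone hh (Tuple.monotone_sort _)

theorem merge_split_of_monotone {h : Fin (r + s) → α} (hh : Monotone h) (p : Perm (Fin (r + s))) :
    merge (fun i => h (p (Fin.castAdd s i))) (fun i => h (p (Fin.natAdd r i))) = h :=
  (eq_merge_of_comp_eq_append hh (Fin.append_castAdd_natAdd (f := h ∘ p)).symm).symm

theorem merge_comp_symm_shuffleOf {f : Fin r → α} {g : Fin s → α} (hf : Monotone f)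
    (hg : Monotone g) {p : Perm (Fin (r + s))} (hp : merge f g ∘ p = Fin.append f g) :
    merge f g ∘ (shuffleOf p.symm).symm = Fin.append f g := by
  set e := shuffleOf p.symm
  have he : IsShuffle r s e := isShuffle_shuffleOf _
  have hblk : blockOf r ∘ (p.symm * e.symm) = blockOf r := by
    rw [Perm.coe_mul, ← Function.comp_assoc, ← blockOf_comp_shuffleOf, Function.comp_assoc,
      Equiv.self_comp_symm, Function.comp_id]
  obtain ⟨ρ₁, ρ₂, hρ⟩ := (blockOf_comp_eq_iff _).mp hblk
  have hq : merge f g ∘ e.symm = Fin.append (f ∘ ρ₁) (g ∘ ρ₂) := by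
    rw [← append_comp_blockPerm, hρ, ← hp, Perm.coe_mul, Function.comp_assoc,
      ← Function.comp_assoc p, Equiv.self_comp_symm, Function.id_comp]
  have h₁ : f ∘ ρ₁ = f := by
    have hmono : Monotone (merge f g ∘ e.symm ∘ Fin.castAdd s) :=
      (monotone_merge f g).comp he.strictMono_symm_castAdd.monotone
    rw [← Function.comp_assoc, hq] at hmono
    simpa using Tuple.unique_monotone (τ := Equiv.refl _) (by simpa using hmono) hf
  have h₂ : g ∘ ρ₂ = g := by
    have hmono : Monotone (merge f g ∘ e.symm ∘ Fin.natAdd r) :=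
      (monotone_merge f g).comp he.strictMono_symm_natAdd.monotone
    rw [← Function.comp_assoc, hq] at hmono
    simpa using Tuple.unique_monotone (τ := Equiv.refl _) (by simpa using hmono) hg
  rw [hq, h₁, h₂]

end Merge

section Count

variable {α : Type*} [LinearOrder α] {r s : ℕ}

noncomputable def shufflesOnto (f : Fin r → α) (g : Fin s → α) : Finset (Perm (Fin (r + s))) :=
  univ.filter fun e => IsShuffle r s e ∧ merge f g ∘ e.symm = Fin.append f g

def shufflesOntoProdEquiv {f : Fin r → α} {g : Fin s → α} (hf : Monotone f) (hg : Monotone g) :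
    {e : Perm (Fin (r + s)) // IsShuffle r s e ∧ merge f g ∘ e.symm = Fin.append f g} ×
      {ρ : Perm (Fin (r + s)) //
        blockOf r ∘ ρ = blockOf r ∧ Fin.append f g ∘ ρ = Fin.append f g} ≃
      {p : Perm (Fin (r + s)) // merge f g ∘ p = Fin.append f g} where
  toFun x := ⟨x.1.1.symm * x.2.1, by
    rw [Perm.coe_mul, ← Function.comp_assoc, x.1.2.2, x.2.2.2]⟩
  invFun p := (⟨shuffleOf p.1.symm, isShuffle_shuffleOf _, merge_comp_symm_shuffleOf hf hg p.2⟩,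
    ⟨shuffleOf p.1.symm * p.1, by
      rw [Perm.coe_mul, ← Function.comp_assoc, blockOf_comp_shuffleOf, Function.comp_assoc,
        Equiv.symm_comp_self, Function.comp_id], by
      rw [Perm.coe_mul, ← Function.comp_assoc,
        ← (Equiv.comp_symm_eq _ _ _).mp (merge_comp_symm_shuffleOf hf hg p.2), p.2]⟩)
  left_inv := by
    rintro ⟨⟨e, he, -⟩, ⟨ρ, hρ, -⟩⟩
    have hshuffle : shuffleOf (e.symm * ρ).symm = e := by
      refine (he.eq_shuffleOf ?_).symm
      have hρ' : blockOf r ∘ ρ.symm = blockOf r := (Equiv.comp_symm_eq _ _ _).mpr hρ.symm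
      funext x
      simpa [Perm.mul_def] using (congrFun hρ' (e x)).symm
    ext1 <;> apply Subtype.ext
    · exact hshuffle
    · show shuffleOf (e.symm * ρ).symm * (e.symm * ρ) = ρ
      rw [hshuffle, ← Perm.inv_def, mul_inv_cancel_left]
  right_inv p := by
    apply Subtype.ext
    show (shuffleOf p.1.symm).symm * (shuffleOf p.1.symm * p.1) = p.1
    rw [← Perm.inv_def, inv_mul_cancel_left]

theorem card_shufflesOnto_mul {f : Fin r → α} {g : Fin s → α} (hf : Monotone f)
    (hg : Monotone g) :
    #(shufflesOnto f g) * (stabilizerCard f * stabilizerCard g) = stabilizerCard (merge f g) := by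
  rw [shufflesOnto, ← Fintype.card_subtype, ← Nat.card_eq_fintype_card,
    ← card_blockPreserving_stabilizer, ← Nat.card_prod,
    Nat.card_congr (shufflesOntoProdEquiv hf hg), ← merge_comp_symm_sort, card_comp_eq_comp_perm]

end Count

section Summation

variable {α : Type*} [LinearOrder α] [Fintype α] {r s : ℕ}

theorem sum_shuffle_monotone_eq_sum_sigma {M : Type*} [AddCommMonoid M]
    (F : Perm (Fin (r + s)) × (Fin (r + s) → α) → M) :
    ∑ x ∈ univ.filter (IsShuffle r s) ×ˢ univ.filter (fun h : Fin (r + s) → α => Monotone h),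
        F x =
      ∑ y ∈ (univ.filter (fun f : Fin r → α => Monotone f) ×ˢ
          univ.filter (fun g : Fin s → α => Monotone g)).sigma
          (fun fg => shufflesOnto fg.1 fg.2),
        F (y.2, merge y.1.1 y.1.2) := by
  refine Finset.sum_nbij'
    (fun x => ⟨((fun i => x.2 (x.1.symm (Fin.castAdd s i))),
      (fun i => x.2 (x.1.symm (Fin.natAdd r i)))), x.1⟩)
    (fun y => (y.2, merge y.1.1 y.1.2)) ?_ ?_ ?_ ?_ ?_
  · rintro ⟨e, h⟩ heh
    simp only [mem_product, mem_filter, mem_univ, true_and] at heh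
    simp only [shufflesOnto, mem_sigma, mem_product, mem_filter, mem_univ, true_and,
      merge_split_of_monotone heh.2]
    exact ⟨⟨heh.2.comp heh.1.strictMono_symm_castAdd.monotone,
      heh.2.comp heh.1.strictMono_symm_natAdd.monotone⟩, heh.1, Fin.append_castAdd_natAdd.symm⟩
  · rintro ⟨⟨f, g⟩, e⟩ he
    simp only [shufflesOnto, mem_sigma, mem_product, mem_filter, mem_univ, true_and] at he
    simp only [mem_product, mem_filter, mem_univ, true_and]
    exact ⟨he.2.1, monotone_merge f g⟩
  · rintro ⟨e, h⟩ heh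
    simp only [mem_product, mem_filter, mem_univ, true_and] at heh
    simp only [merge_split_of_monotone heh.2]
  · rintro ⟨⟨f, g⟩, e⟩ he
    simp only [shufflesOnto, mem_sigma, mem_product, mem_filter, mem_univ, true_and] at he
    have h₁ := congrArg (· ∘ Fin.castAdd s) he.2.2
    have h₂ := congrArg (· ∘ Fin.natAdd r) he.2.2
    simp only [Fin.append_comp_castAdd, Fin.append_comp_natAdd] at h₁ h₂
    simp only [Sigma.mk.injEq, Prod.mk.injEq, heq_eq_eq, and_true]
    exact ⟨h₁, h₂⟩
  · rintro ⟨e, h⟩ heh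
    simp only [mem_product, mem_filter, mem_univ, true_and] at heh
    simp only [merge_split_of_monotone heh.2]

theorem sum_shuffle_sum_monotone {K : Type*} [Field K] [CharZero K]
    (A : (Fin (r + s) → α) → K) :
    ∑ e ∈ univ.filter (IsShuffle r s), ∑ h ∈ univ.filter (fun h : Fin (r + s) → α => Monotone h),
        A (h ∘ e.symm) / stabilizerCard h =
      ∑ f ∈ univ.filter (fun f : Fin r → α => Monotone f),
        ∑ g ∈ univ.filter (fun g : Fin s → α => Monotone g),
          A (Fin.append f g) / (stabilizerCard f * stabilizerCard g) := by
  rw [← Finset.sum_product', ← Finset.sum_product', sum_shuffle_monotone_eq_sum_sigma,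
    Finset.sum_sigma]
  refine Finset.sum_congr rfl fun ⟨f, g⟩ hfg => ?_
  simp only [mem_product, mem_filter, mem_univ, true_and] at hfg
  have hterm : ∀ e ∈ shufflesOnto f g,
      A (merge f g ∘ e.symm) / stabilizerCard (merge f g) =
        A (Fin.append f g) / stabilizerCard (merge f g) := fun e he => by
    rw [((mem_filter.mp he).2).2]
  have hcount := card_shufflesOnto_mul hfg.1 hfg.2
  have hc := left_ne_zero_of_mul (hcount ▸ stabilizerCard_ne_zero (merge f g))
  have hf := stabilizerCard_ne_zero f
  have hg := stabilizerCard_ne_zero g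
  rw [Finset.sum_congr rfl hterm, Finset.sum_const, nsmul_eq_mul, ← hcount]
  push_cast
  field_simp

end Summation

theorem stmt8_general {V : Type*} (K : Type*) [Field K] [CharZero K]
    (n : ℕ) (σ : ℕ → PStep V)
    (r s : ℕ) (ω : Fin (r + s) → V → V → K) :
    iint K n σ r (fun i => ω (Fin.castAdd s i)) *
      iint K n σ s (fun i => ω (Fin.natAdd r i)) =
    ∑ e ∈ Finset.univ.filter (fun e : Equiv.Perm (Fin (r + s)) =>
        (∀ a b : Fin (r + s), (a : ℕ) < r → (b : ℕ) < r → a < b → e.symm a < e.symm b) ∧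
        (∀ a b : Fin (r + s), r ≤ (a : ℕ) → r ≤ (b : ℕ) → a < b → e.symm a < e.symm b)),
      iint K n σ (r + s) (fun i => ω (e i)) := by
  set A : (Fin (r + s) → Fin n) → K := fun w => ∏ j, PStep.pair (ω j) (σ ((w j : ℕ) + 1))
  calc _ = ∑ f ∈ univ.filter (fun f : Fin r → Fin n => Monotone f),
          ∑ g ∈ univ.filter (fun g : Fin s → Fin n => Monotone g),
            A (Fin.append f g) / (stabilizerCard f * stabilizerCard g) := by
        simp only [iint, sum_mul_sum, volFin_val_eq_stabilizerCard]
        refine sum_congr rfl fun f _ => sum_congr rfl fun g _ => ?_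
        simp only [A, div_mul_div_comm, Fin.prod_univ_add, Fin.append_left, Fin.append_right]
    _ = ∑ e ∈ univ.filter (IsShuffle r s),
          ∑ h ∈ univ.filter (fun h : Fin (r + s) → Fin n => Monotone h),
            A (h ∘ e.symm) / stabilizerCard h := by
        -- the general lemma reaches `Monotone` and its decidability through other instances
        convert (sum_shuffle_sum_monotone A).symm using 3
        all_goals ext; simp
    _ = _ := by
        simp only [iint, volFin_val_eq_stabilizerCard]
        refine sum_congr (by ext; simp [IsShuffle]) fun e _ => sum_congr rfl fun h _ => ?_
        simp only [A, Function.comp_apply]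
        rw [Fintype.prod_equiv e (fun i => PStep.pair (ω (e i)) (σ ((h i : ℕ) + 1)))
          (fun j => PStep.pair (ω j) (σ ((h (e.symm j) : ℕ) + 1))) fun i => by simp]

/-- Shuffle product formula:
`(∫_α ω_1⋯ω_r)(∫_α ω_{r+1}⋯ω_{r+s}) = Σ_{(r,s)-shuffles σ} ∫_α ω_{σ(1)}⋯ω_{σ(r+s)}`. -/
theorem stmt8 {V : Type*} (K : Type*) [Field K] [CharZero K] (G : Digraph' V)
    (n : ℕ) (σ : ℕ → PStep V) (h : IsPathMap G n σ)
    (r s : ℕ) (ω : Fin (r + s) → V → V → K) :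
    iint K n σ r (fun i => ω (Fin.castAdd s i)) *
      iint K n σ s (fun i => ω (Fin.natAdd r i)) =
    ∑ e ∈ Finset.univ.filter (fun e : Equiv.Perm (Fin (r + s)) =>
        (∀ a b : Fin (r + s), (a : ℕ) < r → (b : ℕ) < r → a < b → e.symm a < e.symm b) ∧
        (∀ a b : Fin (r + s), r ≤ (a : ℕ) → r ≤ (b : ℕ) → a < b → e.symm a < e.symm b)),
      iint K n σ (r + s) (fun i => ω (e i)) :=
  stmt8_general K n σ r s ω
end

section
/- Counting shuffles stabilizing a merged sequence: let I' and I'' be non-decreasing sequences of lengths r and s with values in {1,...,n}, and let I be the non-decreasing sequence of length r+s obtained by merging them. Then the number of (r,s)-shuffles σ such that applying σ^{-1} to I reproduces I' in positions 1..r and I'' in positions r+1..r+s equals Π_{i=1}^n (φ_i(I')+φ_i(I''))! / (φ_i(I')! φ_i(I'')!), where φ_i counts the multiplicity of the value i. -/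
open Finset

attribute [local instance] Classical.propDecidable

set_option maxHeartbeats 1000000

private lemma cond1_iff' {r s : ℕ} (e : Equiv.Perm (Fin (r + s))) :
    (∀ a b : Fin (r + s), (a : ℕ) < r → (b : ℕ) < r → a < b → e.symm a < e.symm b) ↔
    StrictMono (fun j : Fin r => e.symm (Fin.castAdd s j)) := by
  constructor
  · intro h j1 j2 hj
    refine h _ _ ?_ ?_ ?_
    · rw [Fin.coe_castAdd]; exact j1.isLt
    · rw [Fin.coe_castAdd]; exact j2.isLt
    · rw [Fin.lt_def, Fin.coe_castAdd, Fin.coe_castAdd]; exact hj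
  · intro h a b ha hb hab
    have h1 : a = Fin.castAdd s ⟨(a : ℕ), ha⟩ := by ext; rw [Fin.coe_castAdd]
    have h2 : b = Fin.castAdd s ⟨(b : ℕ), hb⟩ := by ext; rw [Fin.coe_castAdd]
    rw [h1, h2]
    exact h (by rw [Fin.lt_def]; exact hab)

private lemma cond2_iff' {r s : ℕ} (e : Equiv.Perm (Fin (r + s))) :
    (∀ a b : Fin (r + s), r ≤ (a : ℕ) → r ≤ (b : ℕ) → a < b → e.symm a < e.symm b) ↔
    StrictMono (fun j : Fin s => e.symm (Fin.natAdd r j)) := by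
  constructor
  · intro h j1 j2 hj
    refine h _ _ ?_ ?_ ?_
    · rw [Fin.coe_natAdd]; omega
    · rw [Fin.coe_natAdd]; omega
    · rw [Fin.lt_def, Fin.coe_natAdd, Fin.coe_natAdd]
      have : (j1 : ℕ) < (j2 : ℕ) := hj
      omega
  · intro h a b ha hb hab
    have ha' : (a : ℕ) - r < s := by omega
    have hb' : (b : ℕ) - r < s := by omega
    have h1 : a = Fin.natAdd r ⟨(a : ℕ) - r, ha'⟩ := by ext; rw [Fin.coe_natAdd]; simp; omega
    have h2 : b = Fin.natAdd r ⟨(b : ℕ) - r, hb'⟩ := by ext; rw [Fin.coe_natAdd]; simp; omega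
    rw [h1, h2]
    apply h
    rw [Fin.lt_def]
    have : (a : ℕ) < (b : ℕ) := hab
    simp only []
    omega

-- mono_eq_of_counts imported conceptually; re-proved here for the scratch file
private lemma mono_lt_iff_card' {m : ℕ} {f : Fin m → ℕ} (hf : Monotone f) (j : Fin m) (k : ℕ) :
    f j < k ↔ (j : ℕ) < (Finset.univ.filter (fun i => f i < k)).card := by
  constructor
  · intro h
    have hsub : Finset.Iic j ⊆ Finset.univ.filter (fun i => f i < k) := by
      intro i hi
      simp only [Finset.mem_Iic] at hi
      simp only [Finset.mem_filter, Finset.mem_univ, true_and]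
      exact lt_of_le_of_lt (hf hi) h
    have hle := Finset.card_le_card hsub
    rw [Fin.card_Iic] at hle
    omega
  · intro h
    by_contra hc
    push_neg at hc
    have hsub : Finset.univ.filter (fun i => f i < k) ⊆ Finset.Iio j := by
      intro i hi
      simp only [Finset.mem_filter, Finset.mem_univ, true_and] at hi
      simp only [Finset.mem_Iio]
      by_contra hij
      push_neg at hij
      exact absurd (lt_of_le_of_lt (le_trans hc (hf hij)) hi) (lt_irrefl _)
    have hle := Finset.card_le_card hsub
    rw [Fin.card_Iio] at hle
    omega

private lemma card_filter_lt_eq_sum' {m : ℕ} (f : Fin m → ℕ) (k : ℕ) :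
    (Finset.univ.filter (fun i => f i < k)).card
      = ∑ v ∈ Finset.range k, (Finset.univ.filter (fun i => f i = v)).card := by
  rw [Finset.card_eq_sum_card_fiberwise
    (f := f) (t := Finset.range k)
    (fun i hi => by simpa using (Finset.mem_filter.1 hi).2)]
  apply Finset.sum_congr rfl
  intro v hv
  congr 1
  ext i
  simp only [Finset.mem_filter, Finset.mem_univ, true_and]
  constructor
  · rintro ⟨_, h2⟩; exact h2
  · intro h2; exact ⟨by rw [h2]; exact Finset.mem_range.1 hv, h2⟩

private lemma mono_eq_of_counts' {m : ℕ} {f g : Fin m → ℕ} (hf : Monotone f) (hg : Monotone g)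
    (h : ∀ k, (Finset.univ.filter (fun j => f j = k)).card
        = (Finset.univ.filter (fun j => g j = k)).card) :
    f = g := by
  funext j
  have key : ∀ k, f j < k ↔ g j < k := by
    intro k
    rw [mono_lt_iff_card' hf, mono_lt_iff_card' hg, card_filter_lt_eq_sum',
      card_filter_lt_eq_sum', Finset.sum_congr rfl (fun v _ => h v)]
  have h1 := (key (g j + 1)).2 (Nat.lt_succ_self _)
  have h2 := (key (f j + 1)).1 (Nat.lt_succ_self _)
  omega

private lemma step1 (n r s : ℕ) (I : Fin (r + s) → ℕ) (I' : Fin r → ℕ) (I'' : Fin s → ℕ)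
    (hI : Monotone I) (hI' : Monotone I') (hI'' : Monotone I'')
    (hrange : ∀ j, 1 ≤ I j ∧ I j ≤ n) (hrange' : ∀ j, 1 ≤ I' j ∧ I' j ≤ n)
    (hmerge : ∀ k : ℕ, (Finset.univ.filter (fun j : Fin (r + s) => I j = k)).card =
        (Finset.univ.filter (fun j : Fin r => I' j = k)).card +
        (Finset.univ.filter (fun j : Fin s => I'' j = k)).card) :
    (Finset.univ.filter (fun e : Equiv.Perm (Fin (r + s)) =>
        ((∀ a b : Fin (r + s), (a : ℕ) < r → (b : ℕ) < r → a < b → e.symm a < e.symm b) ∧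
         (∀ a b : Fin (r + s), r ≤ (a : ℕ) → r ≤ (b : ℕ) → a < b → e.symm a < e.symm b)) ∧
        (∀ k : Fin r, I (e.symm (Fin.castAdd s k)) = I' k) ∧
        (∀ k : Fin s, I (e.symm (Fin.natAdd r k)) = I'' k))).card
      = ((Finset.univ : Finset (Finset (Fin (r + s)))).filter (fun A => ∀ k,
          (A.filter (fun j => I j = k)).card
            = (Finset.univ.filter (fun j : Fin r => I' j = k)).card)).card := by
  classical
  apply Finset.card_bij
    (fun e _ => Finset.image (fun j : Fin r => e.symm (Fin.castAdd s j)) Finset.univ)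
  · -- maps into T
    intro e he
    simp only [Finset.mem_filter, Finset.mem_univ, true_and] at he
    obtain ⟨⟨hc1, hc2⟩, hI'e, hI''e⟩ := he
    simp only [Finset.mem_filter, Finset.mem_univ, true_and]
    intro k
    rw [Finset.filter_image]
    rw [Finset.card_image_of_injective _
      (fun a b hab => (Fin.castAdd_injective r s) (e.symm.injective hab))]
    congr 1
    ext j
    simp only [Finset.mem_filter, Finset.mem_univ, true_and]
    rw [hI'e j]
  · -- injective
    intro e1 he1 e2 he2 heq
    simp only [Finset.mem_filter, Finset.mem_univ, true_and] at he1 he2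
    obtain ⟨⟨hc1, hc2⟩, _, _⟩ := he1
    obtain ⟨⟨hd1, hd2⟩, _, _⟩ := he2
    have hm1 := (cond1_iff' e1).1 hc1
    have hm2 := (cond1_iff' e2).1 hd1
    have hn1 := (cond2_iff' e1).1 hc2
    have hn2 := (cond2_iff' e2).1 hd2
    set A := Finset.image (fun j : Fin r => e1.symm (Fin.castAdd s j)) Finset.univ with hA
    have hinj1 : Function.Injective (fun j : Fin r => e1.symm (Fin.castAdd s j)) :=
      hm1.injective
    have hinj2 : Function.Injective (fun j : Fin r => e2.symm (Fin.castAdd s j)) :=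
      hm2.injective
    have hAcard : A.card = r := by
      rw [hA, Finset.card_image_of_injective _ hinj1, Finset.card_univ, Fintype.card_fin]
    have hg1 : (fun j : Fin r => e1.symm (Fin.castAdd s j)) = A.orderEmbOfFin hAcard :=
      Finset.orderEmbOfFin_unique hAcard
        (fun x => by rw [hA]; exact Finset.mem_image_of_mem _ (Finset.mem_univ x)) hm1
    have hg2 : (fun j : Fin r => e2.symm (Fin.castAdd s j)) = A.orderEmbOfFin hAcard :=
      Finset.orderEmbOfFin_unique hAcard
        (fun x => by rw [heq]; exact Finset.mem_image_of_mem _ (Finset.mem_univ x)) hm2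
    -- complement images
    have compl_img : ∀ (e : Equiv.Perm (Fin (r + s))),
        Finset.image (fun j : Fin s => e.symm (Fin.natAdd r j)) Finset.univ =
        (Finset.image (fun j : Fin r => e.symm (Fin.castAdd s j)) Finset.univ)ᶜ := by
      intro e
      ext x
      rw [Finset.mem_compl]
      constructor
      · intro hx hx'
        simp only [Finset.mem_image, Finset.mem_univ, true_and] at hx hx'
        obtain ⟨j1, hj1⟩ := hx
        obtain ⟨j2, hj2⟩ := hx'
        have : Fin.natAdd r j1 = Fin.castAdd s j2 := e.symm.injective (hj1.trans hj2.symm)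
        have hv := congrArg Fin.val this
        rw [Fin.coe_natAdd, Fin.coe_castAdd] at hv
        omega
      · intro hx
        simp only [Finset.mem_image, Finset.mem_univ, true_and] at hx ⊢
        by_cases hy : ((e x : Fin (r + s)) : ℕ) < r
        · exfalso
          apply hx
          refine ⟨⟨(e x : ℕ), hy⟩, ?_⟩
          have : Fin.castAdd s ⟨(e x : ℕ), hy⟩ = e x := by ext; rw [Fin.coe_castAdd]
          rw [this, Equiv.symm_apply_apply]
        · push_neg at hy
          have hlt : ((e x : Fin (r + s)) : ℕ) - r < s := by omega
          refine ⟨⟨(e x : ℕ) - r, hlt⟩, ?_⟩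
          have : Fin.natAdd r ⟨(e x : ℕ) - r, hlt⟩ = e x := by
            ext; rw [Fin.coe_natAdd]; simp; omega
          rw [this, Equiv.symm_apply_apply]
    have hcompl_card : (Aᶜ : Finset (Fin (r + s))).card = s := by
      rw [Finset.card_compl, hAcard, Fintype.card_fin]
      omega
    have hh1 : (fun j : Fin s => e1.symm (Fin.natAdd r j)) = Aᶜ.orderEmbOfFin hcompl_card :=
      Finset.orderEmbOfFin_unique hcompl_card
        (fun x => by
          rw [hA, ← compl_img e1]
          exact Finset.mem_image_of_mem _ (Finset.mem_univ x)) hn1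
    have hh2 : (fun j : Fin s => e2.symm (Fin.natAdd r j)) = Aᶜ.orderEmbOfFin hcompl_card :=
      Finset.orderEmbOfFin_unique hcompl_card
        (fun x => by
          rw [heq, ← compl_img e2]
          exact Finset.mem_image_of_mem _ (Finset.mem_univ x)) hn2
    have hsymm : e1.symm = e2.symm := by
      apply Equiv.ext
      intro x
      by_cases hx : (x : ℕ) < r
      · have hxe : x = Fin.castAdd s ⟨(x : ℕ), hx⟩ := by ext; rw [Fin.coe_castAdd]
        rw [hxe]
        exact (congrFun hg1 ⟨(x : ℕ), hx⟩).trans (congrFun hg2 ⟨(x : ℕ), hx⟩).symm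
      · push_neg at hx
        have hlt : (x : ℕ) - r < s := by omega
        have hxe : x = Fin.natAdd r ⟨(x : ℕ) - r, hlt⟩ := by
          ext; rw [Fin.coe_natAdd]; simp; omega
        rw [hxe]
        exact (congrFun hh1 ⟨(x : ℕ) - r, hlt⟩).trans
          (congrFun hh2 ⟨(x : ℕ) - r, hlt⟩).symm
    have := congrArg Equiv.symm hsymm
    rwa [Equiv.symm_symm, Equiv.symm_symm] at this
  · -- surjective
    intro A hA
    simp only [Finset.mem_filter, Finset.mem_univ, true_and] at hA
    have hAcard : A.card = r := by
      have h1 : A.card = ∑ k ∈ Finset.Icc 1 n, (A.filter (fun j => I j = k)).card :=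
        Finset.card_eq_sum_card_fiberwise
          (fun j _ => Finset.mem_Icc.2 ⟨(hrange j).1, (hrange j).2⟩)
      have h2 : (Finset.univ : Finset (Fin r)).card
          = ∑ k ∈ Finset.Icc 1 n, (Finset.univ.filter (fun j : Fin r => I' j = k)).card :=
        Finset.card_eq_sum_card_fiberwise
          (fun j _ => Finset.mem_Icc.2 ⟨(hrange' j).1, (hrange' j).2⟩)
      rw [h1, Finset.sum_congr rfl (fun k _ => hA k), ← h2, Finset.card_univ, Fintype.card_fin]
    have hAccard : (Aᶜ : Finset (Fin (r + s))).card = s := by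
      rw [Finset.card_compl, hAcard, Fintype.card_fin]
      omega
    set g1 := A.orderEmbOfFin hAcard with hg1def
    set g2 := Aᶜ.orderEmbOfFin hAccard with hg2def
    have hsub : ∀ x : Fin (r + s), ¬ (x : ℕ) < r → (x : ℕ) - r < s := fun x h => by omega
    set f : Fin (r + s) → Fin (r + s) := fun x =>
      if h : (x : ℕ) < r then g1 ⟨(x : ℕ), h⟩ else g2 ⟨(x : ℕ) - r, hsub x h⟩ with hf
    have hg1A : ∀ i, g1 i ∈ A := fun i => Finset.orderEmbOfFin_mem A hAcard i
    have hg2A : ∀ i, g2 i ∈ (Aᶜ : Finset (Fin (r + s))) :=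
      fun i => Finset.orderEmbOfFin_mem _ hAccard i
    have finj : Function.Injective f := by
      intro x y hxy
      rw [hf] at hxy
      by_cases hx : (x : ℕ) < r <;> by_cases hy : (y : ℕ) < r
      · simp only [dif_pos hx, dif_pos hy] at hxy
        have := (A.orderEmbOfFin hAcard).injective hxy
        have := congrArg Fin.val this
        exact Fin.ext this
      · simp only [dif_pos hx, dif_neg hy] at hxy
        exact absurd (hxy ▸ hg1A ⟨(x : ℕ), hx⟩) (by
          intro h
          exact (Finset.mem_compl.1 (hg2A ⟨(y : ℕ) - r, hsub y hy⟩)) h)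
      · simp only [dif_neg hx, dif_pos hy] at hxy
        exact absurd (hxy ▸ hg2A ⟨(x : ℕ) - r, hsub x hx⟩) (by
          intro h
          exact (Finset.mem_compl.1 h) (hg1A ⟨(y : ℕ), hy⟩))
      · simp only [dif_neg hx, dif_neg hy] at hxy
        have := (Aᶜ.orderEmbOfFin hAccard).injective hxy
        have := congrArg Fin.val this
        simp only [] at this
        exact Fin.ext (by omega)
    have fbij : Function.Bijective f := Finite.injective_iff_bijective.1 finj
    refine ⟨(Equiv.ofBijective f fbij).symm, ?_, ?_⟩
    · -- membership in shuffle set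
      have hsymmf : ∀ x, ((Equiv.ofBijective f fbij).symm).symm x = f x := fun x => rfl
      have hcast : ∀ j : Fin r, ((Equiv.ofBijective f fbij).symm).symm (Fin.castAdd s j)
          = g1 j := by
        intro j
        rw [hsymmf, hf]
        have hj : ((Fin.castAdd s j : Fin (r + s)) : ℕ) < r := by
          rw [Fin.coe_castAdd]; exact j.isLt
        simp only [dif_pos hj]
        exact congrArg _ (Fin.ext (by simp only [Fin.coe_castAdd]))
      have hnat : ∀ j : Fin s, ((Equiv.ofBijective f fbij).symm).symm (Fin.natAdd r j)
          = g2 j := by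
        intro j
        rw [hsymmf, hf]
        have hj : ¬ ((Fin.natAdd r j : Fin (r + s)) : ℕ) < r := by
          rw [Fin.coe_natAdd]; omega
        simp only [dif_neg hj]
        exact congrArg _ (Fin.ext (by simp only [Fin.coe_natAdd]; omega))
      simp only [Finset.mem_filter, Finset.mem_univ, true_and]
      refine ⟨⟨?_, ?_⟩, ?_, ?_⟩
      · rw [cond1_iff']
        have : (fun j : Fin r => ((Equiv.ofBijective f fbij).symm).symm (Fin.castAdd s j))
            = fun j => g1 j := funext hcast
        rw [this]
        exact (A.orderEmbOfFin hAcard).strictMono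
      · rw [cond2_iff']
        have : (fun j : Fin s => ((Equiv.ofBijective f fbij).symm).symm (Fin.natAdd r j))
            = fun j => g2 j := funext hnat
        rw [this]
        exact (Aᶜ.orderEmbOfFin hAccard).strictMono
      · -- I ∘ g1 = I'
        have himg : Finset.image (fun j : Fin r => g1 j) Finset.univ = A := by
          apply Finset.eq_of_subset_of_card_le
          · intro x hx
            obtain ⟨j, _, rfl⟩ := Finset.mem_image.1 hx
            exact hg1A j
          · rw [hAcard, Finset.card_image_of_injective _ (A.orderEmbOfFin hAcard).injective,
              Finset.card_univ, Fintype.card_fin]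
        have hcounts : ∀ k, (Finset.univ.filter (fun j : Fin r => I (g1 j) = k)).card
            = (Finset.univ.filter (fun j : Fin r => I' j = k)).card := by
          intro k
          rw [← hA k]
          rw [← himg, Finset.filter_image, Finset.card_image_of_injective _
            (A.orderEmbOfFin hAcard).injective]
        have := mono_eq_of_counts' (f := fun j => I (g1 j)) (g := I')
          (hI.comp (A.orderEmbOfFin hAcard).monotone) hI' hcounts
        intro k
        rw [hcast k]
        exact congrFun this k
      · -- I ∘ g2 = I''
        have himg : Finset.image (fun j : Fin s => g2 j) Finset.univ = Aᶜ := by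
          apply Finset.eq_of_subset_of_card_le
          · intro x hx
            obtain ⟨j, _, rfl⟩ := Finset.mem_image.1 hx
            exact hg2A j
          · rw [hAccard, Finset.card_image_of_injective _
              (Aᶜ.orderEmbOfFin hAccard).injective, Finset.card_univ, Fintype.card_fin]
        have hcompl_count : ∀ k, ((Aᶜ : Finset (Fin (r + s))).filter (fun j => I j = k)).card
            = (Finset.univ.filter (fun j : Fin s => I'' j = k)).card := by
          intro k
          have hsplit : (Finset.univ.filter (fun j : Fin (r + s) => I j = k)).card
              = (A.filter (fun j => I j = k)).card
                + ((Aᶜ : Finset (Fin (r + s))).filter (fun j => I j = k)).card := by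
            rw [← Finset.card_union_of_disjoint
              (Finset.disjoint_filter_filter (disjoint_compl_right))]
            congr 1
            rw [← Finset.filter_union, Finset.union_compl]
          have := hmerge k
          have h2 := hA k
          omega
        have hcounts : ∀ k, (Finset.univ.filter (fun j : Fin s => I (g2 j) = k)).card
            = (Finset.univ.filter (fun j : Fin s => I'' j = k)).card := by
          intro k
          rw [← hcompl_count k, ← himg, Finset.filter_image,
            Finset.card_image_of_injective _ (Aᶜ.orderEmbOfFin hAccard).injective]
        have := mono_eq_of_counts' (f := fun j => I (g2 j)) (g := I'')
          (hI.comp (Aᶜ.orderEmbOfFin hAccard).monotone) hI'' hcounts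
        intro k
        rw [hnat k]
        exact congrFun this k
    · -- image equals A
      have hcast : ∀ j : Fin r, ((Equiv.ofBijective f fbij).symm).symm (Fin.castAdd s j)
          = g1 j := by
        intro j
        show f _ = _
        rw [hf]
        have hj : ((Fin.castAdd s j : Fin (r + s)) : ℕ) < r := by
          rw [Fin.coe_castAdd]; exact j.isLt
        simp only [dif_pos hj]
        exact congrArg _ (Fin.ext (by simp only [Fin.coe_castAdd]))
      rw [Finset.image_congr (g := fun j : Fin r => g1 j) (fun j _ => hcast j)]
      apply Finset.eq_of_subset_of_card_le
      · intro x hx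
        obtain ⟨j, _, rfl⟩ := Finset.mem_image.1 hx
        exact hg1A j
      · rw [hAcard, Finset.card_image_of_injective _ (A.orderEmbOfFin hAcard).injective,
          Finset.card_univ, Fintype.card_fin]

private lemma step2 (n : ℕ) {m r : ℕ} (I : Fin m → ℕ) (I' : Fin r → ℕ)
    (hrange : ∀ j, 1 ≤ I j ∧ I j ≤ n) (hrange' : ∀ j, 1 ≤ I' j ∧ I' j ≤ n) :
    ((Finset.univ : Finset (Finset (Fin m))).filter (fun A => ∀ k,
        (A.filter (fun j => I j = k)).card
          = (Finset.univ.filter (fun j : Fin r => I' j = k)).card)).card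
      = ∏ k ∈ Finset.Icc 1 n,
          ((Finset.univ.filter (fun j : Fin m => I j = k)).card).choose
            ((Finset.univ.filter (fun j : Fin r => I' j = k)).card) := by
  classical
  set c : ℕ → ℕ := fun k => (Finset.univ.filter (fun j : Fin r => I' j = k)).card with hc
  have hcz : ∀ k, k ∉ Finset.Icc 1 n → c k = 0 := by
    intro k hk
    rw [hc]
    simp only [Finset.card_eq_zero, Finset.filter_eq_empty_iff]
    intro j _
    intro hj
    exact hk (by rw [← hj] at *; exact Finset.mem_Icc.2 ⟨(hrange' j).1, (hrange' j).2⟩)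
  have hbij : ((Finset.univ : Finset (Finset (Fin m))).filter (fun A => ∀ k,
        (A.filter (fun j => I j = k)).card = c k)).card
      = ((Finset.Icc 1 n).pi
          (fun k => Finset.powersetCard (c k)
            (Finset.univ.filter (fun j : Fin m => I j = k)))).card := by
    apply Finset.card_bij (fun A _ => fun k _ => A.filter (fun j => I j = k))
    · -- maps to
      intro A hA
      simp only [Finset.mem_filter, Finset.mem_univ, true_and] at hA
      rw [Finset.mem_pi]
      intro k hk
      rw [Finset.mem_powersetCard]
      exact ⟨Finset.filter_subset_filter _ (Finset.subset_univ A), hA k⟩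
    · -- injective
      intro A1 h1 A2 h2 heq
      ext j
      have hj : I j ∈ Finset.Icc 1 n := Finset.mem_Icc.2 ⟨(hrange j).1, (hrange j).2⟩
      have := congrFun (congrFun heq (I j)) hj
      constructor
      · intro hjA
        have : j ∈ A2.filter (fun i => I i = I j) := by
          rw [← this]; exact Finset.mem_filter.2 ⟨hjA, rfl⟩
        exact (Finset.mem_filter.1 this).1
      · intro hjA
        have : j ∈ A1.filter (fun i => I i = I j) := by
          rw [this]; exact Finset.mem_filter.2 ⟨hjA, rfl⟩
        exact (Finset.mem_filter.1 this).1
    · -- surjective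
      intro b hb
      rw [Finset.mem_pi] at hb
      refine ⟨(Finset.Icc 1 n).attach.biUnion (fun k => b k.1 k.2), ?_, ?_⟩
      · have key : ∀ k0 (hk0 : k0 ∈ Finset.Icc 1 n),
            ((Finset.Icc 1 n).attach.biUnion (fun k => b k.1 k.2)).filter
              (fun j => I j = k0) = b k0 hk0 := by
          intro k0 hk0
          ext j
          simp only [Finset.mem_filter, Finset.mem_biUnion, Finset.mem_attach, true_and,
            Subtype.exists]
          constructor
          · rintro ⟨⟨k, hk, hjk⟩, hIj⟩
            have hsub := (Finset.mem_powersetCard.1 (hb k hk)).1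
            have := hsub hjk
            have : I j = k := (Finset.mem_filter.1 this).2
            have hkk0 : k = k0 := by omega
            subst hkk0
            exact hjk
          · intro hj
            refine ⟨⟨k0, hk0, hj⟩, ?_⟩
            have hsub := (Finset.mem_powersetCard.1 (hb k0 hk0)).1
            exact (Finset.mem_filter.1 (hsub hj)).2
        simp only [Finset.mem_filter, Finset.mem_univ, true_and]
        intro k0
        by_cases hk0 : k0 ∈ Finset.Icc 1 n
        · rw [key k0 hk0]
          exact (Finset.mem_powersetCard.1 (hb k0 hk0)).2
        · rw [hcz k0 hk0, Finset.card_eq_zero, Finset.filter_eq_empty_iff]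
          intro j hj
          simp only [Finset.mem_biUnion, Finset.mem_attach, true_and, Subtype.exists] at hj
          obtain ⟨k, hk, hjk⟩ := hj
          have hsub := (Finset.mem_powersetCard.1 (hb k hk)).1
          have hIj : I j = k := (Finset.mem_filter.1 (hsub hjk)).2
          intro hIj0
          exact hk0 (hIj0 ▸ hIj ▸ hk)
      · funext k0
        funext hk0
        ext j
        simp only [Finset.mem_filter, Finset.mem_biUnion, Finset.mem_attach, true_and,
          Subtype.exists]
        constructor
        · rintro ⟨⟨k, hk, hjk⟩, hIj⟩
          have hsub := (Finset.mem_powersetCard.1 (hb k hk)).1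
          have : I j = k := (Finset.mem_filter.1 (hsub hjk)).2
          have hkk0 : k = k0 := by omega
          subst hkk0
          exact hjk
        · intro hj
          refine ⟨⟨k0, hk0, hj⟩, ?_⟩
          have hsub := (Finset.mem_powersetCard.1 (hb k0 hk0)).1
          exact (Finset.mem_filter.1 (hsub hj)).2
  rw [hbij, Finset.card_pi]
  exact Finset.prod_congr rfl (fun k _ => by rw [Finset.card_powersetCard])

/-- Counting `(r,s)`-shuffles that reproduce the given non-decreasing sequences `I'`, `I''`
from their merge `I`: the count equals `Π_{i=1}^n (φ_i(I')+φ_i(I''))!/(φ_i(I')!φ_i(I'')!)`. -/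
theorem stmt9 (n r s : ℕ) (I : Fin (r + s) → ℕ) (I' : Fin r → ℕ) (I'' : Fin s → ℕ)
    (hI : Monotone I) (hI' : Monotone I') (hI'' : Monotone I'')
    (hrange : ∀ j, 1 ≤ I j ∧ I j ≤ n) (hrange' : ∀ j, 1 ≤ I' j ∧ I' j ≤ n)
    (hrange'' : ∀ j, 1 ≤ I'' j ∧ I'' j ≤ n)
    (hmerge : ∀ k : ℕ, (Finset.univ.filter (fun j : Fin (r + s) => I j = k)).card =
        (Finset.univ.filter (fun j : Fin r => I' j = k)).card +
        (Finset.univ.filter (fun j : Fin s => I'' j = k)).card) :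
    (Finset.univ.filter (fun e : Equiv.Perm (Fin (r + s)) =>
        ((∀ a b : Fin (r + s), (a : ℕ) < r → (b : ℕ) < r → a < b → e.symm a < e.symm b) ∧
         (∀ a b : Fin (r + s), r ≤ (a : ℕ) → r ≤ (b : ℕ) → a < b → e.symm a < e.symm b)) ∧
        (∀ k : Fin r, I (e.symm (Fin.castAdd s k)) = I' k) ∧
        (∀ k : Fin s, I (e.symm (Fin.natAdd r k)) = I'' k))).card =
    ∏ k ∈ Finset.Icc 1 n,
      Nat.factorial ((Finset.univ.filter (fun j : Fin r => I' j = k)).card +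
          (Finset.univ.filter (fun j : Fin s => I'' j = k)).card) /
        (Nat.factorial ((Finset.univ.filter (fun j : Fin r => I' j = k)).card) *
          Nat.factorial ((Finset.univ.filter (fun j : Fin s => I'' j = k)).card)) := by
    classical
  rw [step1 n r s I I' I'' hI hI' hI'' hrange hrange' hmerge,
    step2 n I I' hrange hrange']
  apply Finset.prod_congr rfl
  intro k _
  rw [hmerge k, Nat.choose_eq_factorial_div_factorial (Nat.le_add_right _ _),
    Nat.add_sub_cancel_left]
end

section
/- Nonvanishing on reduced paths: if α : I_n → G is a reduced path map with n ≥ 1 (α has no trivial arrows, consecutive arrows never cancel: α_{i+1} is never the reverse of α_i and α_i ≠ α_{i+1} never form an elementarily trivial pair), then there exist 1-forms ω_1,...,ω_n with ∫_α ω_1···ω_n = ±1 ≠ 0. Consequently, if all iterated integrals along α vanish then α is a trivial path map. -/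
open Finset

attribute [local instance] Classical.propDecidable

/-!
Take for `ω_i` the 1-form dual to the `i`-th step: it is supported on the underlying arrow of
`α_i`, with the sign making `⟨ω_i, α_i⟩ = 1`. A monotone reindexing `f` contributes to
`∫_α ω_1 ⋯ ω_n` only if every `α_{f i}` is `α_i` or its inverse. If `f i = f (i + 1)`, then
`α_{i+1}` would be `α_i` or its inverse, which reducedness forbids; so `f` is strictly monotone,
hence the identity, and the integral is the single diagonal term `1`.
-/

theorem StrictMono.of_monotone_of_covBy_ne {α β : Type*} [LinearOrder α] [SuccOrder α]
    [IsSuccArchimedean α] [PartialOrder β] {f : α → β} (hf : Monotone f)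
    (hcov : ∀ a b, a ⋖ b → f a ≠ f b) : StrictMono f :=
  strictMono_of_lt_succ fun a ha =>
    (hf (Order.le_succ a)).lt_of_ne (hcov _ _ (Order.covBy_succ_of_not_isMax ha))

lemma volFin_eq_one_of_injective {r : ℕ} {g : Fin r → ℕ} (hg : Function.Injective g) :
    volFin g = 1 := by
  refine prod_eq_one fun k hk => ?_
  obtain ⟨j, -, rfl⟩ := mem_image.mp hk
  have hfiber : univ.filter (fun j' => g j' = g j) = {j} := by
    ext x
    simp [hg.eq_iff]
  simp [hfiber]

lemma iint_eq_prod_of_monotone_eq_id (K : Type*) [Field K] {V : Type*} {n : ℕ}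
    (σ : ℕ → PStep V) (ω : Fin n → V → V → K)
    (hdiag : ∀ f : Fin n → Fin n, Monotone f →
      (∀ i, PStep.pair (ω i) (σ ((f i : ℕ) + 1)) ≠ 0) → f = id) :
    iint K n σ n ω = ∏ i : Fin n, PStep.pair (ω i) (σ ((i : ℕ) + 1)) := by
  unfold iint
  rw [sum_eq_single_of_mem id (mem_filter.mpr ⟨mem_univ _, monotone_id⟩)]
  · simp [volFin_eq_one_of_injective Fin.val_injective]
  · intro f hf hfid
    obtain ⟨i, hi⟩ : ∃ i, PStep.pair (ω i) (σ ((f i : ℕ) + 1)) = 0 := by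
      by_contra! hnz
      exact hfid (hdiag f (mem_filter.mp hf).2 hnz)
    rw [prod_eq_zero (mem_univ i) hi, zero_div]

namespace PStep

variable {V : Type*}

lemma inv_inv (s : PStep V) : s.inv.inv = s := by
  cases s <;> rfl

noncomputable def dualForm (K : Type*) [Field K] : PStep V → V → V → K
  | fwd x y => fun a b => if a = x ∧ b = y then 1 else 0
  | bwd x y => fun a b => if a = x ∧ b = y then -1 else 0
  | triv _ => 0

variable {K : Type*} [Field K]

lemma pair_dualForm_self {s : PStep V} (hs : ∀ v, s ≠ triv v) : pair (dualForm K s) s = 1 := by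
  cases s with
  | fwd x y => simp [pair, dualForm]
  | bwd x y => simp [pair, dualForm]
  | triv v => exact absurd rfl (hs v)

lemma eq_or_eq_inv_of_pair_dualForm_ne_zero {s t : PStep V} (h : pair (dualForm K s) t ≠ 0) :
    t = s ∨ t = s.inv := by
  cases s <;> cases t <;> simp_all [pair, dualForm, inv]

lemma eq_or_eq_inv_of_eq_or_eq_inv {s s' t : PStep V} (h : t = s ∨ t = s.inv)
    (h' : t = s' ∨ t = s'.inv) : s' = s ∨ s' = s.inv := by
  rcases h with rfl | rfl <;> rcases h' with h' | h'
  · exact Or.inl h'.symm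
  · exact Or.inr (by rw [h', inv_inv])
  · exact Or.inr h'.symm
  · exact Or.inl (by rw [← inv_inv s', ← h', inv_inv])

end PStep

open PStep in
lemma monotone_eq_id_of_pair_dualForm_ne_zero (K : Type*) [Field K] {V : Type*} {n : ℕ}
    {σ : ℕ → PStep V}
    (hne : ∀ t, 1 ≤ t → t < n → σ (t + 1) ≠ σ t ∧ σ (t + 1) ≠ (σ t).inv)
    (f : Fin n → Fin n) (hf : Monotone f)
    (hnz : ∀ i : Fin n, pair (dualForm K (σ ((i : ℕ) + 1))) (σ ((f i : ℕ) + 1)) ≠ 0) : f = id := by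
  refine (StrictMono.of_monotone_of_covBy_ne hf fun a b hab hfab => ?_).eq_id
  have hb : (b : ℕ) = a + 1 := (Nat.covBy_iff_add_one_eq.mp (Fin.covBy_iff.mp hab)).symm
  have hσa := eq_or_eq_inv_of_pair_dualForm_ne_zero (hnz a)
  have hσb := eq_or_eq_inv_of_pair_dualForm_ne_zero (hnz b)
  rw [← hfab, hb] at hσb
  have hstep := hne (a + 1) (Nat.le_add_left 1 _) (by omega)
  rcases eq_or_eq_inv_of_eq_or_eq_inv hσa hσb with h | h
  exacts [hstep.1 h, hstep.2 h]

theorem stmt13_general {V : Type*} (K : Type*) [Field K]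
    (n : ℕ) (σ : ℕ → PStep V)
    (hnotriv : ∀ t, 1 ≤ t → t ≤ n → ∀ v : V, σ t ≠ PStep.triv v)
    (hne : ∀ t, 1 ≤ t → t < n → σ (t + 1) ≠ σ t ∧ σ (t + 1) ≠ (σ t).inv) :
    ∃ ω : Fin n → V → V → K, iint K n σ n ω = 1 ∨ iint K n σ n ω = -1 := by
  refine ⟨fun i => PStep.dualForm K (σ ((i : ℕ) + 1)), Or.inl ?_⟩
  rw [iint_eq_prod_of_monotone_eq_id K σ _ (monotone_eq_id_of_pair_dualForm_ne_zero K hne)]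
  exact prod_eq_one fun i _ => PStep.pair_dualForm_self (hnotriv _ (Nat.le_add_left 1 _) i.isLt)

/-- Nonvanishing on reduced paths: a reduced path map of length `n ≥ 1` admits 1-forms
`ω_1,…,ω_n` with `∫_α ω_1⋯ω_n = ±1 ≠ 0`. -/
theorem stmt13 {V : Type*} (K : Type*) [Field K] [CharZero K] (G : Digraph' V)
    (n : ℕ) (hn : 1 ≤ n) (σ : ℕ → PStep V) (h : IsPathMap G n σ)
    (hnotriv : ∀ t, 1 ≤ t → t ≤ n → ∀ v : V, σ t ≠ PStep.triv v)
    (hne : ∀ t, 1 ≤ t → t < n → σ (t + 1) ≠ σ t ∧ σ (t + 1) ≠ (σ t).inv) :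
    ∃ ω : Fin n → V → V → K, iint K n σ n ω = 1 ∨ iint K n σ n ω = -1 :=
  stmt13_general K n σ hnotriv hne
end

section
/- Additivity on products of loops of high order: let α be a loop at x of order at least r (meaning ∫_α u = 0 for every nonempty word u of 1-forms of length ≤ r-1) and β a path map from x of order at least s. Then for every word u = ω_1···ω_l of 1-forms with 1 ≤ l ≤ r+s-1, ∫_{α⋆β} u = ∫_α u + ∫_β u. -/
open Finset

attribute [local instance] Classical.propDecidable

/-- A path map is at least of order `r` if all iterated integrals of length `≤ r-1`
vanish on it. -/
def atLeastOrder (K : Type*) [Field K] {V : Type*} (n : ℕ) (σ : ℕ → PStep V) (r : ℕ) : Prop :=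
  ∀ l : ℕ, 1 ≤ l → l ≤ r - 1 → ∀ ω : Fin l → V → V → K, iint K n σ l ω = 0

section Helpers

lemma volFin_comp_equiv {a b : ℕ} (e : Fin a ≃ Fin b) (u : Fin b → ℕ) :
    volFin (fun j => u (e j)) = volFin u := by
  unfold volFin
  have himg : Finset.image (fun j => u (e j)) Finset.univ = Finset.image u Finset.univ := by
    ext k
    simp only [Finset.mem_image, Finset.mem_univ, true_and]
    constructor
    · rintro ⟨j, rfl⟩; exact ⟨e j, rfl⟩
    · rintro ⟨j, rfl⟩; exact ⟨e.symm j, by simp⟩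
  rw [himg]
  refine Finset.prod_congr rfl fun k _ => ?_
  congr 1
  exact Finset.card_bij' (fun j _ => e j) (fun j _ => e.symm j)
    (by intro j hj; simp only [Finset.mem_filter, Finset.mem_univ, true_and] at hj ⊢; simpa using hj)
    (by intro j hj; simp only [Finset.mem_filter, Finset.mem_univ, true_and] at hj ⊢; simpa using hj)
    (by intro j _; simp) (by intro j _; simp)

lemma volFin_comp_inj_s16 {a : ℕ} (e : ℕ → ℕ) (he : Function.Injective e) (u : Fin a → ℕ) :
    volFin (fun j => e (u j)) = volFin u := by
  unfold volFin
  have himg : Finset.image (fun j => e (u j)) Finset.univ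
      = Finset.image e (Finset.image u Finset.univ) := by
    rw [Finset.image_image]; rfl
  rw [himg, Finset.prod_image (fun x _ y _ h => he h)]
  refine Finset.prod_congr rfl fun k _ => ?_
  congr 2
  refine Finset.filter_congr fun j _ => ?_
  exact he.eq_iff

lemma volFin_add {a b : ℕ} (u : Fin (a + b) → ℕ)
    (hd : ∀ (j : Fin a) (k : Fin b), u (Fin.castAdd b j) ≠ u (Fin.natAdd a k)) :
    volFin u = volFin (fun j => u (Fin.castAdd b j)) * volFin (fun j => u (Fin.natAdd a j)) := by
  unfold volFin
  have himg : Finset.image u Finset.univ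
      = Finset.image (fun j => u (Fin.castAdd b j)) Finset.univ
        ∪ Finset.image (fun j => u (Fin.natAdd a j)) Finset.univ := by
    ext k
    simp only [Finset.mem_image, Finset.mem_univ, true_and, Finset.mem_union]
    constructor
    · rintro ⟨j, rfl⟩
      rcases Nat.lt_or_ge (j : ℕ) a with hj | hj
      · exact Or.inl ⟨⟨j, hj⟩, by congr 1⟩
      · refine Or.inr ⟨⟨(j : ℕ) - a, by have := j.isLt; omega⟩, ?_⟩
        congr 1
        exact Fin.ext (by simp [Fin.natAdd]; omega)
    · rintro (⟨j, rfl⟩ | ⟨j, rfl⟩)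
      exacts [⟨_, rfl⟩, ⟨_, rfl⟩]
  have hdisj : Disjoint (Finset.image (fun j => u (Fin.castAdd b j)) Finset.univ)
      (Finset.image (fun j => u (Fin.natAdd a j)) Finset.univ) := by
    rw [Finset.disjoint_left]
    rintro k hk1 hk2
    simp only [Finset.mem_image, Finset.mem_univ, true_and] at hk1 hk2
    obtain ⟨j1, h1⟩ := hk1
    obtain ⟨j2, h2⟩ := hk2
    exact hd j1 j2 (h1.trans h2.symm)
  rw [himg, Finset.prod_union hdisj]
  congr 1
  · refine Finset.prod_congr rfl fun k hk => ?_
    congr 1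
    rw [Finset.card_filter, Finset.card_filter, Fin.sum_univ_add]
    have hz : ∀ j : Fin b, (if u (Fin.natAdd a j) = k then 1 else 0) = 0 := by
      intro j
      simp only [Finset.mem_image, Finset.mem_univ, true_and] at hk
      obtain ⟨j0, h0⟩ := hk
      rw [if_neg]
      intro h
      exact hd j0 j (h0.trans h.symm)
    simp [hz]
  · refine Finset.prod_congr rfl fun k hk => ?_
    congr 1
    rw [Finset.card_filter, Finset.card_filter, Fin.sum_univ_add]
    have hz : ∀ j : Fin a, (if u (Fin.castAdd b j) = k then 1 else 0) = 0 := by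
      intro j
      simp only [Finset.mem_image, Finset.mem_univ, true_and] at hk
      obtain ⟨j0, h0⟩ := hk
      rw [if_neg]
      intro h
      exact hd j j0 (h.trans h0.symm)
    simp [hz]

end Helpers
section Helpers2

/-- Number of indices mapped below `n`. -/
noncomputable def cnt {l q : ℕ} (n : ℕ) (f : Fin l → Fin q) : ℕ :=
  (Finset.univ.filter (fun j => (f j : ℕ) < n)).card

lemma cnt_le {l q n : ℕ} (f : Fin l → Fin q) : cnt n f ≤ l := by
  unfold cnt
  simpa using Finset.card_filter_le (Finset.univ : Finset (Fin l)) (fun j => (f j : ℕ) < n)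

lemma lt_cnt_iff {l q n : ℕ} {f : Fin l → Fin q} (hf : Monotone f) (j : Fin l) :
    (j : ℕ) < cnt n f ↔ (f j : ℕ) < n := by
  constructor
  · intro hj
    by_contra hn
    push_neg at hn
    have hsub : (Finset.univ.filter (fun k => ((f k : ℕ) < n))) ⊆ Finset.Iio j := by
      intro k hk
      simp only [Finset.mem_filter, Finset.mem_univ, true_and] at hk
      rw [Finset.mem_Iio]
      by_contra hkj
      push_neg at hkj
      have : (f j : ℕ) ≤ (f k : ℕ) := Fin.le_def.mp (hf hkj)
      omega
    have := Finset.card_le_card hsub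
    rw [Fin.card_Iio] at this
    unfold cnt at hj
    omega
  · intro hfj
    have hsub : Finset.Iic j ⊆ (Finset.univ.filter (fun k => ((f k : ℕ) < n))) := by
      intro k hk
      rw [Finset.mem_Iic] at hk
      simp only [Finset.mem_filter, Finset.mem_univ, true_and]
      have : (f k : ℕ) ≤ (f j : ℕ) := Fin.le_def.mp (hf hk)
      omega
    have := Finset.card_le_card hsub
    rw [Fin.card_Iic] at this
    unfold cnt
    omega

lemma card_filter_coe_lt {l i : ℕ} (hil : i ≤ l) :
    ((Finset.univ : Finset (Fin l)).filter (fun j : Fin l => (j : ℕ) < i)).card = i := by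
  have h2 : ((Finset.univ : Finset (Fin l)).filter (fun j : Fin l => (j : ℕ) < i)).card
      = (Finset.range i).card := by
    refine Finset.card_bij' (fun j _ => (j : ℕ))
      (fun k hk => (⟨k, lt_of_lt_of_le (Finset.mem_range.mp hk) hil⟩ : Fin l))
      ?_ ?_ ?_ ?_
    all_goals intro a ha
    pick_goal 3
    · rfl
    pick_goal 3
    · rfl
    · simp only [Finset.mem_filter, Finset.mem_univ, true_and] at ha
      exact Finset.mem_range.mpr ha
    · simp only [Finset.mem_filter, Finset.mem_univ, true_and]
      exact Finset.mem_range.mp ha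
  rw [h2, Finset.card_range]

/-- The shifted index `i + j` in `Fin l`. -/
def sIdx {l : ℕ} (i : ℕ) (hil : i ≤ l) (j : Fin (l - i)) : Fin l :=
  ⟨i + (j : ℕ), by have := j.isLt; omega⟩

/-- Gluing of a pair of index maps into one. -/
def glue {l n m : ℕ} (i : ℕ) (hil : i ≤ l) (g : Fin i → Fin n) (h : Fin (l - i) → Fin m) :
    Fin l → Fin (n + m) :=
  fun j => if hj : (j : ℕ) < i then
    ⟨(g ⟨j, hj⟩ : ℕ), by have := (g ⟨j, hj⟩).isLt; omega⟩
  else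
    ⟨n + (h ⟨(j : ℕ) - i, by have := j.isLt; omega⟩ : ℕ),
      by have := (h ⟨(j : ℕ) - i, by have := j.isLt; omega⟩).isLt; omega⟩

lemma glue_mono {l n m i : ℕ} (hil : i ≤ l) {g : Fin i → Fin n} {h : Fin (l - i) → Fin m}
    (hg : Monotone g) (hh : Monotone h) : Monotone (glue i hil g h) := by
  intro j k hjk
  rw [Fin.le_def]
  have hjk' : (j : ℕ) ≤ (k : ℕ) := Fin.le_def.mp hjk
  unfold glue
  rcases Nat.lt_or_ge (j : ℕ) i with hj | hj <;> rcases Nat.lt_or_ge (k : ℕ) i with hk | hk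
  · rw [dif_pos hj, dif_pos hk]
    exact Fin.le_def.mp (hg (show (⟨(j : ℕ), hj⟩ : Fin i) ≤ ⟨(k : ℕ), hk⟩ from hjk'))
  · rw [dif_pos hj, dif_neg (not_lt.mpr hk)]
    have := (g ⟨(j : ℕ), hj⟩).isLt
    simp only
    omega
  · omega
  · rw [dif_neg (not_lt.mpr hj), dif_neg (not_lt.mpr hk)]
    simp only
    have : (h ⟨(j : ℕ) - i, by have := j.isLt; omega⟩ : ℕ)
        ≤ (h ⟨(k : ℕ) - i, by have := k.isLt; omega⟩ : ℕ) := by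
      refine Fin.le_def.mp (hh ?_)
      show (j : ℕ) - i ≤ (k : ℕ) - i
      omega
    omega

lemma cnt_glue {l n m i : ℕ} (hil : i ≤ l) (g : Fin i → Fin n) (h : Fin (l - i) → Fin m) :
    cnt n (glue i hil g h) = i := by
  unfold cnt
  have hfe : (Finset.univ.filter fun j : Fin l => ((glue i hil g h j : ℕ) < n))
      = Finset.univ.filter (fun j : Fin l => (j : ℕ) < i) := by
    refine Finset.filter_congr fun j _ => ?_
    unfold glue
    rcases Nat.lt_or_ge (j : ℕ) i with hj | hj
    · rw [dif_pos hj]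
      simpa [hj] using (g ⟨(j : ℕ), hj⟩).isLt
    · rw [dif_neg (not_lt.mpr hj)]
      simp only
      constructor
      · intro hc; omega
      · intro hc; omega
  rw [hfe, card_filter_coe_lt hil]

end Helpers2
section Helpers3
variable {K : Type*} [Field K] {V : Type*}

lemma iint_eq_one (q : ℕ) (σ : ℕ → PStep V) {r : ℕ} (hr : r = 0) (ω : Fin r → V → V → K) :
    iint K q σ r ω = 1 := by
  subst hr
  unfold iint
  have h1 : (Finset.univ.filter fun f : Fin 0 → Fin q => Monotone f) = Finset.univ := by
    refine Finset.filter_true_of_mem fun f _ => ?_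
    intro a
    exact a.elim0
  rw [h1, Finset.univ_unique, Finset.sum_singleton]
  simp [volFin]

lemma unglue1_glue {l n m i : ℕ} (hil : i ≤ l) (g : Fin i → Fin n) (h : Fin (l - i) → Fin m)
    (j : Fin i) : (glue i hil g h (Fin.castLE hil j) : ℕ) = (g j : ℕ) := by
  unfold glue
  rw [dif_pos (show ((Fin.castLE hil j : Fin l) : ℕ) < i from j.isLt)]
  simp

lemma unglue2_glue {l n m i : ℕ} (hil : i ≤ l) (g : Fin i → Fin n) (h : Fin (l - i) → Fin m)
    (j : Fin (l - i)) : (glue i hil g h (sIdx i hil j) : ℕ) = n + (h j : ℕ) := by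
  unfold glue
  rw [dif_neg (show ¬ ((sIdx i hil j : Fin l) : ℕ) < i by simp [sIdx])]
  have key : ∀ a : Fin (l - i), a = j → n + ((h a : Fin m) : ℕ) = n + ((h j : Fin m) : ℕ) :=
    fun a ha => by rw [ha]
  apply key
  apply Fin.ext
  simp [sIdx]

lemma sum_fiber_eq {l n m i : ℕ} (hil : i ≤ l)
    (F : (Fin l → Fin (n + m)) → K) (G : (Fin i → Fin n) → K) (H : (Fin (l - i) → Fin m) → K)
    (hval : ∀ g h, F (glue i hil g h) = G g * H h) :
    ∑ f ∈ (Finset.univ.filter (fun f : Fin l → Fin (n + m) => Monotone f)).filter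
        (fun f => cnt n f = i), F f
      = (∑ g ∈ Finset.univ.filter (fun g : Fin i → Fin n => Monotone g), G g)
        * (∑ h ∈ Finset.univ.filter (fun h : Fin (l - i) → Fin m => Monotone h), H h) := by
  rw [Finset.sum_mul_sum, ← Finset.sum_product']
  symm
  refine Finset.sum_bij' (i := fun p _ => glue i hil p.1 p.2)
    (j := fun f hf =>
      ((fun j => ⟨(f (Fin.castLE hil j) : ℕ), by
          have hm : Monotone f := (Finset.mem_filter.mp (Finset.mem_filter.mp hf).1).2
          have hc : cnt n f = i := (Finset.mem_filter.mp hf).2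
          exact (lt_cnt_iff hm _).mp (by rw [hc]; exact j.isLt)⟩),
       (fun j => ⟨(f (sIdx i hil j) : ℕ) - n, by
          have hm : Monotone f := (Finset.mem_filter.mp (Finset.mem_filter.mp hf).1).2
          have hc : cnt n f = i := (Finset.mem_filter.mp hf).2
          have hge : ¬ ((f (sIdx i hil j) : ℕ) < n) := by
            intro hlt
            have h2 := (lt_cnt_iff hm (sIdx i hil j)).mpr hlt
            rw [hc] at h2
            simp only [sIdx] at h2
            omega
          have := (f (sIdx i hil j)).isLt
          omega⟩)))
    ?_ ?_ ?_ ?_ ?_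
  · rintro ⟨g, h⟩ hp
    rw [Finset.mem_product] at hp
    obtain ⟨hg, hh⟩ := hp
    simp only [Finset.mem_filter, Finset.mem_univ, true_and] at hg hh ⊢
    exact ⟨glue_mono hil hg hh, cnt_glue hil g h⟩
  · intro f hf
    have hm : Monotone f := (Finset.mem_filter.mp (Finset.mem_filter.mp hf).1).2
    rw [Finset.mem_product]
    constructor
    · simp only [Finset.mem_filter, Finset.mem_univ, true_and]
      intro j k hjk
      rw [Fin.le_def]
      exact Fin.le_def.mp (hm (show (Fin.castLE hil j) ≤ (Fin.castLE hil k) from hjk))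
    · simp only [Finset.mem_filter, Finset.mem_univ, true_and]
      intro j k hjk
      rw [Fin.le_def]
      have : (f (sIdx i hil j) : ℕ) ≤ (f (sIdx i hil k) : ℕ) := by
        refine Fin.le_def.mp (hm ?_)
        rw [Fin.le_def]
        simp only [sIdx]
        have := Fin.le_def.mp hjk
        omega
      simp only
      omega
  · rintro ⟨g, h⟩ hp
    simp only [Prod.mk.injEq]
    constructor
    · funext j
      apply Fin.ext
      exact unglue1_glue hil g h j
    · funext j
      apply Fin.ext
      show (glue i hil g h (sIdx i hil j) : ℕ) - n = (h j : ℕ)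
      rw [unglue2_glue hil g h j]
      omega
  · intro f hf
    have hm : Monotone f := (Finset.mem_filter.mp (Finset.mem_filter.mp hf).1).2
    have hc : cnt n f = i := (Finset.mem_filter.mp hf).2
    funext j
    apply Fin.ext
    by_cases hj : (j : ℕ) < i
    · simp only [glue, dif_pos hj]
      have : Fin.castLE hil ⟨(j : ℕ), hj⟩ = j := Fin.ext rfl
      rw [this]
    · simp only [glue, dif_neg hj]
      have hidx : sIdx i hil ⟨(j : ℕ) - i, by have := j.isLt; omega⟩ = j := by
        apply Fin.ext
        simp only [sIdx]
        omega
      rw [hidx]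
      have hge : ¬ ((f j : ℕ) < n) := fun hlt => by
        have h2 := (lt_cnt_iff hm j).mpr hlt
        rw [hc] at h2
        omega
      omega
  · rintro ⟨g, h⟩ hp
    exact (hval g h).symm

lemma sum_fiberwise'' {α : Type*} {M : Type*} [AddCommMonoid M] (s : Finset α) (g : α → ℕ)
    (b : ℕ) (hg : ∀ a ∈ s, g a < b) (F : α → M) :
    ∑ a ∈ s, F a = ∑ i ∈ Finset.range b, ∑ a ∈ s.filter (fun a => g a = i), F a :=
  (Finset.sum_fiberwise_of_maps_to (fun a ha => Finset.mem_range.mpr (hg a ha)) F).symm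

end Helpers3
/-- Additivity on products of loops of high order: if `α` is a loop at `x` of order `≥ r`
and `β` a path map from `x` of order `≥ s`, then for every word of length `1 ≤ l ≤ r+s-1`,
`∫_{α⋆β} u = ∫_α u + ∫_β u`. -/
theorem stmt16 {V : Type*} (K : Type*) [Field K] [CharZero K] (G : Digraph' V)
    (n m r s : ℕ) (σ τ : ℕ → PStep V)
    (hσ : IsPathMap G n σ) (hτ : IsPathMap G m τ)
    (hloop : (σ 1).src = (σ n).tgt) (hfrom : (τ 1).src = (σ 1).src)
    (hα : atLeastOrder K n σ r) (hβ : atLeastOrder K m τ s) :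
    ∀ l : ℕ, 1 ≤ l → l ≤ r + s - 1 → ∀ ω : Fin l → V → V → K,
      iint K (n + m) (concatP n σ τ) l ω = iint K n σ l ω + iint K m τ l ω := by
  intro l hl hls ω
  set Ω : ℕ → V → V → K := fun t => if h : t < l then ω ⟨t, h⟩ else 0 with hΩ
  have key : iint K (n + m) (concatP n σ τ) l ω
      = ∑ i ∈ Finset.range (l + 1),
          iint K n σ i (fun j => Ω (j : ℕ)) * iint K m τ (l - i) (fun j => Ω (i + (j : ℕ))) := by
    unfold iint
    rw [sum_fiberwise'' _ (cnt n) (l + 1) (fun f _ => Nat.lt_succ_of_le (cnt_le f))]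
    refine Finset.sum_congr rfl fun i hi => ?_
    have hil : i ≤ l := Nat.lt_succ_iff.mp (Finset.mem_range.mp hi)
    refine sum_fiber_eq hil _ _ _ ?_
    intro g h
    have eq1 : i + (l - i) = l := Nat.add_sub_cancel' hil
    have hca : ∀ j : Fin i, finCongr eq1 (Fin.castAdd (l - i) j) = Fin.castLE hil j :=
      fun j => Fin.ext (by simp)
    have hna : ∀ j : Fin (l - i), finCongr eq1 (Fin.natAdd i j) = sIdx i hil j :=
      fun j => Fin.ext (by simp [sIdx])
    have hnum : (∏ x : Fin l, PStep.pair (ω x) (concatP n σ τ ((glue i hil g h x : ℕ) + 1)))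
        = (∏ j : Fin i, PStep.pair (Ω (j : ℕ)) (σ ((g j : ℕ) + 1)))
          * ∏ j : Fin (l - i), PStep.pair (Ω (i + (j : ℕ))) (τ ((h j : ℕ) + 1)) := by
      rw [← Fintype.prod_equiv (finCongr eq1)
        (fun x => PStep.pair (ω (finCongr eq1 x))
          (concatP n σ τ ((glue i hil g h (finCongr eq1 x) : ℕ) + 1)))
        (fun x => PStep.pair (ω x) (concatP n σ τ ((glue i hil g h x : ℕ) + 1)))
        (fun x => rfl)]
      rw [Fin.prod_univ_add]
      congr 1
      · refine Finset.prod_congr rfl fun j _ => ?_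
        rw [hca j, unglue1_glue]
        have hle : (g j : ℕ) + 1 ≤ n := (g j).isLt
        unfold concatP
        rw [if_pos hle]
        have hωj : Ω (j : ℕ) = ω (Fin.castLE hil j) := by
          simp only [hΩ]
          rw [dif_pos (lt_of_lt_of_le j.isLt hil)]
          exact congrArg ω (Fin.ext rfl)
        rw [hωj]
      · refine Finset.prod_congr rfl fun j _ => ?_
        rw [hna j, unglue2_glue]
        unfold concatP
        rw [if_neg (by omega : ¬ (n + (h j : ℕ) + 1 ≤ n))]
        rw [show n + (h j : ℕ) + 1 - n = (h j : ℕ) + 1 by omega]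
        have hωj : Ω (i + (j : ℕ)) = ω (sIdx i hil j) := by
          simp only [hΩ]
          rw [dif_pos (show i + (j : ℕ) < l by have := j.isLt; omega)]
          exact congrArg ω (Fin.ext rfl)
        rw [hωj]
    have hden : volFin (fun x : Fin l => (glue i hil g h x : ℕ))
        = volFin (fun j : Fin i => (g j : ℕ)) * volFin (fun j : Fin (l - i) => (h j : ℕ)) := by
      rw [← volFin_comp_equiv (finCongr eq1) (fun x => (glue i hil g h x : ℕ))]
      rw [volFin_add _ (fun j k => by
        rw [hca j, hna k, unglue1_glue, unglue2_glue]
        have := (g j).isLt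
        omega)]
      congr 1
      · apply congrArg
        funext j
        rw [hca j, unglue1_glue]
      · refine Eq.trans ?_ (volFin_comp_inj_s16 (n + ·) (add_right_injective n)
          (fun j => (h j : ℕ)))
        apply congrArg
        funext j
        rw [hna j, unglue2_glue]
    rw [hnum, hden, Nat.cast_mul]
    exact (div_mul_div_comm _ _ _ _).symm
  rw [key]
  have hω1 : (fun j : Fin l => Ω (j : ℕ)) = ω := by
    funext j
    simp only [hΩ]
    rw [dif_pos j.isLt]
  have hω2 : (fun j : Fin (l - 0) => Ω (0 + (j : ℕ))) = ω := by
    funext j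
    simp only [hΩ, Nat.zero_add]
    rw [dif_pos (show (j : ℕ) < l from j.isLt)]
    exact congrArg ω (Fin.ext rfl)
  rw [Finset.sum_eq_add_of_mem 0 l (Finset.mem_range.mpr (by omega))
    (Finset.mem_range.mpr (by omega)) (by omega) ?mid]
  · rw [iint_eq_one n σ rfl, one_mul, hω2, hω1,
      iint_eq_one m τ (Nat.sub_self l), mul_one]
    exact add_comm _ _
  case mid =>
    intro c hc hcc
    obtain ⟨hc0, hcl⟩ := hcc
    rw [Finset.mem_range] at hc
    by_cases hcr : c ≤ r - 1
    · rw [hα c (by omega) hcr, zero_mul]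
    · rw [hβ (l - c) (by omega) (by omega), mul_zero]
end

section
/- Isosceles integrals agree on the two sides of a square: suppose G contains a standard square with arrows a_1 : v_0→v_1, a_2 : v_1→v_3, a_3 : v_0→v_2, a_4 : v_2→v_3, and 1-forms ω_1,...,ω_r satisfy ω_i(a_1)+ω_i(a_2) = ω_i(a_3)+ω_i(a_4) for each i, together with the isosceles condition that the products Π_i ω_i(b_i) are invariant under permuting which factors get a_1 vs a_2 (resp. a_3 vs a_4). Then ∫_{a_1⋆a_2} ω_1···ω_r = (Π_i(ω_i(a_1)+ω_i(a_2)))/r! = (Π_i(ω_i(a_3)+ω_i(a_4)))/r! = ∫_{a_3⋆a_4} ω_1···ω_r. -/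
open Finset

attribute [local instance] Classical.propDecidable

/-!
A monotone map `Fin r → Fin 2` is determined by the number `k` of indices it sends to the first
arrow, and its volume number is `k! (r - k)!`; so `∫_{a⋆b} ω₁⋯ωᵣ = ∑ₖ Pₖ / (k! (r - k)!)`, where
`Pₖ` takes its first `k` factors from `a` and the others from `b`. Expanding `∏ᵢ (ωᵢ(a) + ωᵢ(b))`
over subsets, the isosceles condition makes each of the `choose r k` terms with `k` factors from
`a` equal to `Pₖ`, so the product is `∑ₖ choose r k · Pₖ = r! · ∫_{a⋆b} ω₁⋯ωᵣ`. On a square,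
`ωᵢ(a₁) + ωᵢ(a₂) = ωᵢ(a₃) + ωᵢ(a₄)` identifies the two products.
-/

def IsIsosceles {ι M : Type*} [Fintype ι] [CommMonoid M] (α β : ι → M) : Prop :=
  ∀ (b : ι → Bool) (e : Equiv.Perm ι),
    (∏ i, (if b (e i) then α i else β i)) = ∏ i, (if b i then α i else β i)

section Isosceles

variable {ι M : Type*} [DecidableEq ι]

open scoped Pointwise in
theorem Finset.exists_perm_mem_iff_of_card_eq {s t : Finset ι} (h : #s = #t) :
    ∃ g : Equiv.Perm ι, ∀ i, g i ∈ s ↔ i ∈ t := by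
  obtain ⟨g, hg⟩ := (Set.powersetCard.isPretransitive (α := ι) (n := #t)).exists_smul_eq
    ⟨t, rfl⟩ ⟨s, h⟩
  refine ⟨g, fun i => ?_⟩
  have hs : g • t = s := by simpa using congrArg Subtype.val hg
  rw [← hs, ← Equiv.Perm.smul_def, Finset.smul_mem_smul_finset_iff]

theorem IsIsosceles.prod_ite_mem_eq_of_card_eq [Fintype ι] [CommMonoid M] {α β : ι → M}
    (h : IsIsosceles α β) {s t : Finset ι} (hst : #s = #t) :
    ∏ i, (if i ∈ s then α i else β i) = ∏ i, (if i ∈ t then α i else β i) := by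
  obtain ⟨g, hg⟩ := Finset.exists_perm_mem_iff_of_card_eq hst
  simpa [hg] using (h (fun i => decide (i ∈ s)) g).symm

theorem IsIsosceles.prod_add_eq_sum_choose_mul {R : Type*} [CommSemiring R] {r : ℕ}
    {α β : Fin r → R} (h : IsIsosceles α β) :
    ∏ i, (α i + β i) =
      ∑ k ∈ range (r + 1), (r.choose k : R) * ∏ i : Fin r, (if (i : ℕ) < k then α i else β i) := by
  have hsplit : ∀ t : Finset (Fin r), (∏ i ∈ t, α i) * ∏ i ∈ univ \ t, β i =
      ∏ i : Fin r, (if (i : ℕ) < #t then α i else β i) := fun t => by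
    have hpiecewise := prod_piecewise univ t α β
    rw [univ_inter] at hpiecewise
    rw [← hpiecewise]
    refine (h.prod_ite_mem_eq_of_card_eq (t := {i : Fin r | (i : ℕ) < #t}) ?_).trans (by simp)
    simpa [Fin.card_filter_val_lt] using card_le_univ t
  rw [prod_add, sum_congr rfl fun t _ => hsplit t,
    sum_powerset_apply_card (fun k => ∏ i : Fin r, (if (i : ℕ) < k then α i else β i)),
    card_univ, Fintype.card_fin]
  simp only [nsmul_eq_mul]

end Isosceles

theorem sum_filter_monotone_fin_two {M : Type*} [AddCommMonoid M] {r : ℕ}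
    (F : (Fin r → Fin 2) → M) :
    ∑ f ∈ univ.filter (fun f : Fin r → Fin 2 => Monotone f), F f =
      ∑ k ∈ range (r + 1), F (fun i => if (i : ℕ) < k then 0 else 1) := by
  symm
  refine sum_nbij' (fun k i => if (i : ℕ) < k then 0 else 1) (fun f => #{i | f i = 0})
    ?_ ?_ ?_ ?_ (fun _ _ => rfl)
  · intro k _
    rw [mem_filter]
    refine ⟨mem_univ _, ?_⟩
    intro i j hij
    dsimp only
    split_ifs <;> first | decide | (rw [Fin.le_def] at hij; omega)
  · intro f _
    rw [mem_range, Nat.lt_succ_iff]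
    exact (card_filter_le _ _).trans_eq (card_fin r)
  · intro k hk
    rw [mem_range] at hk
    simp only [Fin.isValue, ite_eq_left_iff, not_lt, one_ne_zero, imp_false, not_le,
      Fin.card_filter_val_lt, inf_eq_right]
    omega
  · intro f hf
    rw [mem_filter] at hf
    have hzero_lower : ∀ i j, j ≤ i → f i = 0 → f j = 0 := fun i j hji hi =>
      Fin.le_zero_iff.mp (hi ▸ hf.2 hji)
    funext i
    have key := Fin.lt_card_filter_univ_iff_apply_of_imp (j := i) _ hzero_lower
    split_ifs with hi
    · exact (key.mp hi).symm
    · have := mt key.mpr hi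
      omega

theorem volFin_of_le_one {r : ℕ} (g : Fin r → ℕ) (hg : ∀ i, g i ≤ 1) :
    volFin g = (#{j | g j = 0}).factorial * (#{j | g j = 1}).factorial := by
  have hsub : image g univ ⊆ {0, 1} := by
    intro k hk
    obtain ⟨j, -, rfl⟩ := mem_image.mp hk
    have := hg j
    simp only [mem_insert, mem_singleton]
    omega
  rw [volFin, prod_subset hsub, prod_pair zero_ne_one]
  intro k _ hk
  simp_all

theorem volFin_ite_zero_one {r : ℕ} (p : Fin r → Prop) [DecidablePred p] :
    volFin (fun i => if p i then 0 else 1) = (#{i | p i}).factorial * (#{i | ¬ p i}).factorial := by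
  rw [volFin_of_le_one _ fun i => by split_ifs <;> simp]
  simp

theorem iint_two_step_of_isIsosceles {K : Type*} [Field K] [CharZero K] {V : Type*} {x y z : V}
    {r : ℕ} {ω : Fin r → V → V → K} (h : IsIsosceles (fun i => ω i x y) (fun i => ω i y z)) :
    iint K 2 (fun t => if t ≤ 1 then PStep.fwd x y else PStep.fwd y z) r ω =
      (∏ i, (ω i x y + ω i y z)) / r.factorial := by
  rw [iint, sum_filter_monotone_fin_two, h.prod_add_eq_sum_choose_mul, sum_div]
  refine sum_congr rfl fun k hk => ?_
  have hkr : k ≤ r := Nat.lt_succ_iff.mp (mem_range.mp hk)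
  have hvol : volFin (fun i : Fin r => ((if (i : ℕ) < k then 0 else 1 : Fin 2) : ℕ)) =
      k.factorial * (r - k).factorial := by
    simp only [apply_ite Fin.val, Fin.val_zero, Fin.val_one, volFin_ite_zero_one]
    have hzeros : #{i : Fin r | (i : ℕ) < k} = k := by simp [Fin.card_filter_val_lt, hkr]
    have hones : #{i : Fin r | ¬ (i : ℕ) < k} = r - k := by
      have := card_filter_add_card_filter_not (s := univ) (fun i : Fin r => (i : ℕ) < k)
      rw [card_fin, hzeros] at this
      omega
    rw [hzeros, hones]
  have hprod : ∀ i : Fin r, PStep.pair (ω i)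
      ((fun t => if t ≤ 1 then PStep.fwd x y else PStep.fwd y z)
        (((if (i : ℕ) < k then 0 else 1 : Fin 2) : ℕ) + 1)) =
      if (i : ℕ) < k then ω i x y else ω i y z := fun i => by
    split_ifs <;> rfl
  rw [hvol, prod_congr rfl fun i _ => hprod i, Nat.cast_choose K hkr]
  push_cast
  field_simp
  rw [mul_div_mul_right _ _ (Nat.cast_ne_zero.mpr r.factorial_ne_zero)]

theorem stmt19_general {V : Type*} (K : Type*) [Field K] [CharZero K]
    (v0 v1 v2 v3 : V)
    (r : ℕ) (ω : Fin r → V → V → K)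
    (hcl : ∀ i, ω i v0 v1 + ω i v1 v3 = ω i v0 v2 + ω i v2 v3)
    (hiso12 : ∀ (b : Fin r → Bool) (e : Equiv.Perm (Fin r)),
      (∏ i, (if b (e i) then ω i v0 v1 else ω i v1 v3)) =
        ∏ i, (if b i then ω i v0 v1 else ω i v1 v3))
    (hiso34 : ∀ (b : Fin r → Bool) (e : Equiv.Perm (Fin r)),
      (∏ i, (if b (e i) then ω i v0 v2 else ω i v2 v3)) =
        ∏ i, (if b i then ω i v0 v2 else ω i v2 v3)) :
    iint K 2 (fun t => if t ≤ 1 then PStep.fwd v0 v1 else PStep.fwd v1 v3) r ω =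
        (∏ i, (ω i v0 v1 + ω i v1 v3)) / (Nat.factorial r : K) ∧
    (∏ i, (ω i v0 v1 + ω i v1 v3)) / (Nat.factorial r : K) =
        (∏ i, (ω i v0 v2 + ω i v2 v3)) / (Nat.factorial r : K) ∧
    (∏ i, (ω i v0 v2 + ω i v2 v3)) / (Nat.factorial r : K) =
        iint K 2 (fun t => if t ≤ 1 then PStep.fwd v0 v2 else PStep.fwd v2 v3) r ω :=
  ⟨iint_two_step_of_isIsosceles hiso12, by simp only [hcl],
    (iint_two_step_of_isIsosceles hiso34).symm⟩

/-- Isosceles iterated integrals agree on the two sides of a standard square: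
`∫_{a_1⋆a_2} ω_1⋯ω_r = Π_i(ω_i(a_1)+ω_i(a_2))/r! = Π_i(ω_i(a_3)+ω_i(a_4))/r! = ∫_{a_3⋆a_4} ω_1⋯ω_r`. -/
theorem stmt19 {V : Type*} (K : Type*) [Field K] [CharZero K] (G : Digraph' V)
    (v0 v1 v2 v3 : V)
    (ha1 : G.Arrow v0 v1) (ha2 : G.Arrow v1 v3) (ha3 : G.Arrow v0 v2) (ha4 : G.Arrow v2 v3)
    (r : ℕ) (ω : Fin r → V → V → K)
    (hcl : ∀ i, ω i v0 v1 + ω i v1 v3 = ω i v0 v2 + ω i v2 v3)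
    (hiso12 : ∀ (b : Fin r → Bool) (e : Equiv.Perm (Fin r)),
      (∏ i, (if b (e i) then ω i v0 v1 else ω i v1 v3)) =
        ∏ i, (if b i then ω i v0 v1 else ω i v1 v3))
    (hiso34 : ∀ (b : Fin r → Bool) (e : Equiv.Perm (Fin r)),
      (∏ i, (if b (e i) then ω i v0 v2 else ω i v2 v3)) =
        ∏ i, (if b i then ω i v0 v2 else ω i v2 v3)) :
    iint K 2 (fun t => if t ≤ 1 then PStep.fwd v0 v1 else PStep.fwd v1 v3) r ω =
        (∏ i, (ω i v0 v1 + ω i v1 v3)) / (Nat.factorial r : K) ∧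
    (∏ i, (ω i v0 v1 + ω i v1 v3)) / (Nat.factorial r : K) =
        (∏ i, (ω i v0 v2 + ω i v2 v3)) / (Nat.factorial r : K) ∧
    (∏ i, (ω i v0 v2 + ω i v2 v3)) / (Nat.factorial r : K) =
        iint K 2 (fun t => if t ≤ 1 then PStep.fwd v0 v2 else PStep.fwd v2 v3) r ω :=
  stmt19_general K v0 v1 v2 v3 r ω hcl hiso12 hiso34
end
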